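/- Let Ω ⊆ ℝ² and w be fully symmetric, w with finite moments. For each choice of signs let {P_{j,m}(w_{ε,δ}) : 0 ≤ j ≤ m} be an orthonormal basis of V_m(w_{ε,δ}, √Ω) with respect to ⟨f,g⟩ = ∫_{√Ω} f g w_{ε,δ}. Define P_j^{2m}(w; u,v) = P_{j,m}(w_{−1/2,−1/2}; u², v²) and P_j^{2m+1}(w; u,v) = v · P_{j,m}(w_{−1/2,1/2}; u², v²) for 0 ≤ j ≤ m, and Q_j^{2m}(w; u,v) = u v · P_{j,m−1}(w_{1/2,1/2}; u², v²) for 0 ≤ j ≤ m−1 and Q_j^{2m+1}(w; u,v) = u · P_{j,m}(w_{1/2,−1/2}; u², v²) for 0 ≤ j ≤ m. Then {P_j^{n}(w) : 0 ≤ j ≤ ⌊n/2⌋} is an orthonormal basis of V_n^E(w, Ω) and {Q_j^{n}(w) : 0 ≤ j ≤ ⌊(n−1)/2⌋ if n even, 0 ≤ j ≤ ⌊n/2⌋ if n odd} is an orthonormal basis of V_n^O(w, Ω), both with respect to ⟨f,g⟩ = ∫_Ω f g w. -/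

import Mathlib

open MeasureTheory MvPolynomial

noncomputable section

/-- Pochhammer symbol `(a)_n` for a real number `a`. -/
def pochR (a : ℝ) (n : ℕ) : ℝ := ∏ k ∈ Finset.range n, (a + k)

/-- The Jacobi polynomial `P_n^{(a,b)}`, as a real function, defined through its
hypergeometric expansion. -/
def jacobiP (a b : ℝ) (n : ℕ) (t : ℝ) : ℝ :=
  pochR (a + 1) n / (n.factorial : ℝ) *
    ∑ i ∈ Finset.range (n + 1),
      pochR (-(n : ℝ)) i * pochR ((n : ℝ) + a + b + 1) i /
          (pochR (a + 1) i * (i.factorial : ℝ)) * (((1 : ℝ) - t) / 2) ^ i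

/-- The Gegenbauer polynomial `C_n^λ`, via its standard expression in terms of Jacobi
polynomials, normalized by `C_n^λ(1) = (2λ)_n / n!`. -/
def gegenC (lam : ℝ) (n : ℕ) (t : ℝ) : ℝ :=
  pochR (2 * lam) n / pochR (lam + 1 / 2) n * jacobiP (lam - 1 / 2) (lam - 1 / 2) n t

/-- The generalized Gegenbauer polynomial `C_n^{(λ,μ)}`. -/
def genGegen (lam mu : ℝ) (n : ℕ) (t : ℝ) : ℝ :=
  if n % 2 = 0 then
    pochR (lam + mu) (n / 2) / pochR (mu + 1 / 2) (n / 2) *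
      jacobiP (lam - 1 / 2) (mu - 1 / 2) (n / 2) (2 * t ^ 2 - 1)
  else
    pochR (lam + mu) (n / 2 + 1) / pochR (mu + 1 / 2) (n / 2 + 1) * t *
      jacobiP (lam - 1 / 2) (mu + 1 / 2) (n / 2) (2 * t ^ 2 - 1)

/-- Norm square `h_n^{(a,b)}` of the Jacobi polynomial `P_n^{(a,b)}` with respect to the
normalized Jacobi weight on `[-1,1]`. -/
def hJac (a b : ℝ) (n : ℕ) : ℝ :=
  pochR (a + 1) n * pochR (b + 1) n * (a + b + n + 1) /
    ((n.factorial : ℝ) * pochR (a + b + 2) n * (a + b + 2 * n + 1))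

/-- Norm square `𝗁_n^{(λ,μ)}` of the generalized Gegenbauer polynomial with respect to the
normalized weight proportional to `|t|^{2μ} (1-t²)^{λ-1/2}` on `[-1,1]`. -/
def hGG (lam mu : ℝ) (n : ℕ) : ℝ :=
  if n % 2 = 0 then
    pochR (lam + 1 / 2) (n / 2) * pochR (lam + mu) (n / 2) * (lam + mu) /
      (((n / 2).factorial : ℝ) * pochR (mu + 1 / 2) (n / 2) * (lam + mu + n))
  else
    pochR (lam + 1 / 2) (n / 2) * pochR (lam + mu) (n / 2 + 1) * (lam + mu) /
      (((n / 2).factorial : ℝ) * pochR (mu + 1 / 2) (n / 2 + 1) * (lam + mu + n))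

/-- Square of the euclidean norm on `Fin d → ℝ`. -/
def sqn {d : ℕ} (x : Fin d → ℝ) : ℝ := ∑ i, x i ^ 2

/-- Euclidean norm on `Fin d → ℝ`. -/
def euclNorm {d : ℕ} (x : Fin d → ℝ) : ℝ := Real.sqrt (sqn x)

/-- The (possibly non-normalized) weighted inner product `∫_D f g W`. -/
def wip {m : ℕ} (W : (Fin m → ℝ) → ℝ) (D : Set (Fin m → ℝ)) (f g : (Fin m → ℝ) → ℝ) : ℝ :=
  ∫ x in D, f x * g x * W x

/-- `V_n(W, D)`: polynomials of total degree at most `n` that are orthogonal to all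
polynomials of total degree `< n` with respect to the weight `W` on `D`. -/
def Vsp {m : ℕ} (n : ℕ) (W : (Fin m → ℝ) → ℝ) (D : Set (Fin m → ℝ)) :
    Set (MvPolynomial (Fin m) ℝ) :=
  {p | p.totalDegree ≤ n ∧ ∀ q : MvPolynomial (Fin m) ℝ, q.totalDegree < n →
    wip W D (fun x => eval x p) (fun x => eval x q) = 0}

/-- The family `v`, restricted to the index set `idx`, is an orthogonal basis of `V`
with respect to the weight `W` on `D`. -/
def IsOrthoBasisFor {m : ℕ} {ι : Type*} (idx : Set ι) (v : ι → MvPolynomial (Fin m) ℝ)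
    (V : Set (MvPolynomial (Fin m) ℝ)) (W : (Fin m → ℝ) → ℝ) (D : Set (Fin m → ℝ)) : Prop :=
  (∀ i ∈ idx, v i ∈ V) ∧
    (∀ i ∈ idx, ∀ j ∈ idx, i ≠ j →
      wip W D (fun x => eval x (v i)) (fun x => eval x (v j)) = 0) ∧
    ∀ p ∈ V, p ∈ Submodule.span ℝ (v '' idx)

/-- The family `v`, restricted to the index set `idx`, is an orthonormal basis of `V`
with respect to the weight `W` on `D`. -/
def IsONBasisFor {m : ℕ} {ι : Type*} [DecidableEq ι] (idx : Set ι)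
    (v : ι → MvPolynomial (Fin m) ℝ)
    (V : Set (MvPolynomial (Fin m) ℝ)) (W : (Fin m → ℝ) → ℝ) (D : Set (Fin m → ℝ)) : Prop :=
  (∀ i ∈ idx, v i ∈ V) ∧
    (∀ i ∈ idx, ∀ j ∈ idx,
      wip W D (fun x => eval x (v i)) (fun x => eval x (v j)) = if i = j then 1 else 0) ∧
    ∀ p ∈ V, p ∈ Submodule.span ℝ (v '' idx)

/-- Bivariate members of `V_n(W,D)` that are even in the first variable. -/
def VspE2 (n : ℕ) (W : (Fin 2 → ℝ) → ℝ) (D : Set (Fin 2 → ℝ)) :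
    Set (MvPolynomial (Fin 2) ℝ) :=
  {p | p ∈ Vsp n W D ∧ ∀ s t : ℝ, eval ![-s, t] p = eval ![s, t] p}

/-- Bivariate members of `V_n(W,D)` that are odd in the first variable. -/
def VspO2 (n : ℕ) (W : (Fin 2 → ℝ) → ℝ) (D : Set (Fin 2 → ℝ)) :
    Set (MvPolynomial (Fin 2) ℝ) :=
  {p | p ∈ Vsp n W D ∧ ∀ s t : ℝ, eval ![-s, t] p = -eval ![s, t] p}

/-- Formal Laplacian of a polynomial. -/
def mvLap {d : ℕ} (p : MvPolynomial (Fin d) ℝ) : MvPolynomial (Fin d) ℝ :=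
  ∑ i : Fin d, pderiv i (pderiv i p)

/-- Dimension of the space of spherical harmonics of degree `k` in `d` variables,
`C(k+d-1, k) - C(k+d-3, k-2)`, the second binomial being `0` for `k < 2`. -/
def dimSH (d k : ℕ) : ℕ :=
  (k + d - 1).choose k - (if 2 ≤ k then (k + d - 3).choose (k - 2) else 0)

/-- Surface measure on the unit sphere of `ℝ^d`. -/
def sphereMeasure (d : ℕ) : Measure (Metric.sphere (0 : EuclideanSpace ℝ (Fin d)) 1) :=
  (volume : Measure (EuclideanSpace ℝ (Fin d))).toSphere

/-- `Y` is an orthonormal basis of the space `H_k^d` of spherical harmonics of degree `k`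
in `d` variables, each harmonic being identified with its homogeneous harmonic extension. -/
def IsONBHarm (d k : ℕ) (Y : Fin (dimSH d k) → MvPolynomial (Fin d) ℝ) : Prop :=
  (∀ ℓ, (Y ℓ).IsHomogeneous k ∧ mvLap (Y ℓ) = 0) ∧
    ∀ ℓ ℓ', (∫ ξ : Metric.sphere (0 : EuclideanSpace ℝ (Fin d)) 1,
        eval (WithLp.equiv 2 (Fin d → ℝ) ξ.1) (Y ℓ) *
          eval (WithLp.equiv 2 (Fin d → ℝ) ξ.1) (Y ℓ') ∂(sphereMeasure d)) =
      if ℓ = ℓ' then 1 else 0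

/-- First `d` coordinates of a point of `ℝ^{d+1}`. -/
def xpart {d : ℕ} (z : Fin (d + 1) → ℝ) : Fin d → ℝ := fun i => z i.castSucc

/-- Last coordinate of a point of `ℝ^{d+1}`. -/
def tpart {d : ℕ} (z : Fin (d + 1) → ℝ) : ℝ := z (Fin.last d)

/-- Evaluation of a polynomial in `d+1` variables at the point `(x, t)`. -/
def pev {d : ℕ} (q : MvPolynomial (Fin (d + 1)) ℝ) (x : Fin d → ℝ) (t : ℝ) : ℝ :=
  eval (Fin.snoc x t) q

/-- Members of `V_n(W,D)` in `d+1` variables that are even in the last variable `t`. -/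
def VspEt {d : ℕ} (n : ℕ) (W : (Fin (d + 1) → ℝ) → ℝ) (D : Set (Fin (d + 1) → ℝ)) :
    Set (MvPolynomial (Fin (d + 1)) ℝ) :=
  {p | p ∈ Vsp n W D ∧ ∀ (x : Fin d → ℝ) (t : ℝ), pev p x (-t) = pev p x t}

/-- Members of `V_n(W,D)` in `d+1` variables that are odd in the last variable `t`. -/
def VspOt {d : ℕ} (n : ℕ) (W : (Fin (d + 1) → ℝ) → ℝ) (D : Set (Fin (d + 1) → ℝ)) :
    Set (MvPolynomial (Fin (d + 1)) ℝ) :=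
  {p | p ∈ Vsp n W D ∧ ∀ (x : Fin d → ℝ) (t : ℝ), pev p x (-t) = -pev p x t}

/-- Substitution `(u, v) ↦ (u², v²)` in a bivariate polynomial. -/
def sub2 (p : MvPolynomial (Fin 2) ℝ) : MvPolynomial (Fin 2) ℝ :=
  bind₁ (fun i => (X i) ^ 2) p

/-- The triangle `{(u,v) : u ≥ 0, v ≥ 0, u + v ≤ 1}`. -/
def triSet : Set (Fin 2 → ℝ) := {p | 0 ≤ p 0 ∧ 0 ≤ p 1 ∧ p 0 + p 1 ≤ 1}

/-- The Jacobi weight `u^a v^b (1-u-v)^c` on the triangle. -/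
def Wtri (a b c : ℝ) : (Fin 2 → ℝ) → ℝ := fun p => p 0 ^ a * p 1 ^ b * (1 - p 0 - p 1) ^ c

/-- The four-parameter triangle orthogonal polynomial `T_{j,m}^{a,b,c,e}`, as a function
defined away from `v = 1`. -/
def Tfun4 (a b c e : ℝ) (j m : ℕ) (u v : ℝ) : ℝ :=
  jacobiP (2 * j + a + c + e + 1) b (m - j) (2 * v - 1) * (1 - v) ^ j *
    jacobiP a c j (1 - 2 * u / (1 - v))

/-- The triangle orthogonal polynomial `T_{j,m}^{a,b,c}`, as a function defined away
from `v = 1`. -/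
def Tfun (a b c : ℝ) (j m : ℕ) (u v : ℝ) : ℝ :=
  jacobiP (2 * j + a + c + 1) b (m - j) (2 * v - 1) * (1 - v) ^ j *
    jacobiP a c j (1 - 2 * u / (1 - v))

/-- The triangle orthogonal polynomial `S_{j,m}^{a,b,c}`, as a function defined away
from `u = 1`. -/
def Sfun (a b c : ℝ) (j m : ℕ) (u v : ℝ) : ℝ :=
  jacobiP (2 * j + b + c + 1) a (m - j) (2 * u - 1) * (1 - u) ^ j *
    jacobiP c b j (2 * v / (1 - u) - 1)

/-- The triangle orthogonal polynomial `R_{j,m}^{a,b,c}`, as a function defined away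
from `u + v = 0`. -/
def Rfun (a b c : ℝ) (j m : ℕ) (u v : ℝ) : ℝ :=
  jacobiP (2 * j + a + b + 1) c (m - j) (1 - 2 * u - 2 * v) * (u + v) ^ j *
    jacobiP b a j ((u - v) / (u + v))

def Afun (u v : ℝ) : ℝ := u * v + Real.sqrt (1 - u ^ 2) * Real.sqrt (1 - v ^ 2)

def Bfun (u v : ℝ) : ℝ := u * v - Real.sqrt (1 - u ^ 2) * Real.sqrt (1 - v ^ 2)

/-- The polynomials `P_{j,N}^{(a,b)}` on the square, as functions on `[-1,1]²`. -/
def PjN (a b : ℝ) (j N : ℕ) (u v : ℝ) : ℝ :=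
  if N % 2 = 0 then
    jacobiP a b (N / 2) (Afun u v) * jacobiP a b j (Bfun u v) +
      jacobiP a b j (Afun u v) * jacobiP a b (N / 2) (Bfun u v)
  else
    (u + v) * (jacobiP a (b + 1) (N / 2) (Afun u v) * jacobiP a (b + 1) j (Bfun u v) +
      jacobiP a (b + 1) j (Afun u v) * jacobiP a (b + 1) (N / 2) (Bfun u v))

/-- Reflection of the last coordinate of a point of `ℝ^{d+1}`. -/
def tneg {d : ℕ} (z : Fin (d + 1) → ℝ) : Fin (d + 1) → ℝ :=
  Function.update z (Fin.last d) (-(z (Fin.last d)))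

/-- The operator `⟨x, ∇_x⟩` acting on polynomials in the variables `(x, t)`. -/
def xdel {d : ℕ} (p : MvPolynomial (Fin (d + 1)) ℝ) : MvPolynomial (Fin (d + 1)) ℝ :=
  ∑ i : Fin d, X i.castSucc * pderiv i.castSucc p

/-- The Laplacian `Δ_x` in the `x` variables, acting on polynomials in `(x, t)`. -/
def lapx {d : ℕ} (p : MvPolynomial (Fin (d + 1)) ℝ) : MvPolynomial (Fin (d + 1)) ℝ :=
  ∑ i : Fin d, pderiv i.castSucc (pderiv i.castSucc p)

/-- The derivative `∂_t` in the last variable, acting on polynomials in `(x, t)`. -/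
def dtP {d : ℕ} (p : MvPolynomial (Fin (d + 1)) ℝ) : MvPolynomial (Fin (d + 1)) ℝ :=
  pderiv (Fin.last d) p

namespace Stmt8Aux


lemma vec2 (x : Fin 2 → ℝ) : ![x 0, x 1] = x := by
  funext i; fin_cases i <;> rfl

def diagCLM (c : Fin 2 → ℝ) : (Fin 2 → ℝ) →L[ℝ] (Fin 2 → ℝ) :=
  ContinuousLinearMap.pi (fun i => c i • ContinuousLinearMap.proj i)

lemma diagCLM_det (c : Fin 2 → ℝ) : (diagCLM c : (Fin 2 → ℝ) →L[ℝ] (Fin 2 → ℝ)).det = c 0 * c 1 := by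
  have h : LinearMap.toMatrix (Pi.basisFun ℝ (Fin 2)) (Pi.basisFun ℝ (Fin 2))
      ((diagCLM c : (Fin 2 → ℝ) →L[ℝ] (Fin 2 → ℝ)) : (Fin 2 → ℝ) →ₗ[ℝ] (Fin 2 → ℝ))
      = Matrix.diagonal c := by
    ext i j
    simp [LinearMap.toMatrix_apply, diagCLM, Matrix.diagonal, Pi.single_apply, eq_comm]
  have := LinearMap.det_toMatrix (Pi.basisFun ℝ (Fin 2))
      ((diagCLM c : (Fin 2 → ℝ) →L[ℝ] (Fin 2 → ℝ)) : (Fin 2 → ℝ) →ₗ[ℝ] (Fin 2 → ℝ))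
  rw [h] at this
  rw [ContinuousLinearMap.det, ← this, Matrix.det_diagonal, Fin.prod_univ_two]

lemma hasFDerivAt_diag (h : Fin 2 → ℝ → ℝ) (h' : Fin 2 → ℝ) (x : Fin 2 → ℝ)
    (H : ∀ i, HasDerivAt (h i) (h' i) (x i)) :
    HasFDerivAt (fun y : Fin 2 → ℝ => fun i => h i (y i)) (diagCLM h') x := by
  rw [hasFDerivAt_pi']
  intro i
  have hproj : HasFDerivAt (fun y : Fin 2 → ℝ => y i)
      (ContinuousLinearMap.proj i : (Fin 2 → ℝ) →L[ℝ] ℝ) x :=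
    (ContinuousLinearMap.proj i : (Fin 2 → ℝ) →L[ℝ] ℝ).hasFDerivAt
  have := (H i).comp_hasFDerivAt x hproj
  convert this using 1
  all_goals rfl

def Tc (c : Fin 2 → ℝ) : (Fin 2 → ℝ) → (Fin 2 → ℝ) := fun x i => c i * x i

lemma integral_Tc (c : Fin 2 → ℝ) (hc : ∀ i, c i = 1 ∨ c i = -1)
    (A : Set (Fin 2 → ℝ)) (hA : MeasurableSet A) (g : (Fin 2 → ℝ) → ℝ) :
    ∫ x in Tc c '' A, g x = ∫ x in A, g (Tc c x) := by
  have hd : ∀ x ∈ A, HasFDerivWithinAt (Tc c) (diagCLM c) A x := by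
    intro x _
    exact (hasFDerivAt_diag (fun i t => c i * t) c x
      (fun i => by simpa using (hasDerivAt_id (x i)).const_mul (c i))).hasFDerivWithinAt
  have hinj : Set.InjOn (Tc c) A := by
    intro x _ y _ hxy
    funext i
    have h1 : c i * x i = c i * y i := congrFun hxy i
    have h2 : c i ≠ 0 := by rcases hc i with h | h <;> rw [h] <;> norm_num
    exact mul_left_cancel₀ h2 h1
  rw [integral_image_eq_integral_abs_det_fderiv_smul volume hA hd hinj g]
  apply setIntegral_congr_fun hA
  intro x _
  rw [diagCLM_det]
  have : |c 0 * c 1| = 1 := by rcases hc 0 with h | h <;> rcases hc 1 with h' | h' <;> rw [h, h'] <;> norm_num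
  rw [this]
  simp



lemma axes_null (i : Fin 2) : volume {x : Fin 2 → ℝ | x i = 0} = 0 := by
  have h : {x : Fin 2 → ℝ | x i = 0}
      = Set.univ.pi (fun j => if j = i then ({0} : Set ℝ) else Set.univ) := by
    ext x
    simp only [Set.mem_setOf_eq, Set.mem_pi, Set.mem_univ, forall_true_left]
    constructor
    · intro hx j; by_cases hj : j = i <;> simp [hj, hx]
    · intro hx; have := hx i; simpa using this
  rw [h, volume_pi_pi]
  exact Finset.prod_eq_zero (Finset.mem_univ i) (by simp)

lemma Tc_invol (c : Fin 2 → ℝ) (hc : ∀ i, c i = 1 ∨ c i = -1) (x : Fin 2 → ℝ) :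
    Tc c (Tc c x) = x := by
  funext i
  have : c i * c i = 1 := by rcases hc i with h | h <;> rw [h] <;> norm_num
  simp only [Tc]
  calc c i * (c i * x i) = (c i * c i) * x i := by ring
  _ = x i := by rw [this, one_mul]

lemma Tc_image (c : Fin 2 → ℝ) (hc : ∀ i, c i = 1 ∨ c i = -1)
    (Ω : Set (Fin 2 → ℝ)) (hΩ : ∀ x ∈ Ω, Tc c x ∈ Ω)
    (S S' : Set (Fin 2 → ℝ)) (hS : ∀ x, x ∈ S → Tc c x ∈ S') (hS' : ∀ x, x ∈ S' → Tc c x ∈ S) :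
    Tc c '' (Ω ∩ S) = Ω ∩ S' := by
  ext y
  constructor
  · rintro ⟨x, ⟨hx1, hx2⟩, rfl⟩
    exact ⟨hΩ x hx1, hS x hx2⟩
  · rintro ⟨hy1, hy2⟩
    exact ⟨Tc c y, ⟨hΩ y hy1, hS' y hy2⟩, Tc_invol c hc y⟩


def c0 : Fin 2 → ℝ := ![-1, 1]
def c1 : Fin 2 → ℝ := ![1, -1]

lemma c0_pm : ∀ i, c0 i = 1 ∨ c0 i = -1 := by intro i; fin_cases i <;> simp [c0]
lemma c1_pm : ∀ i, c1 i = 1 ∨ c1 i = -1 := by intro i; fin_cases i <;> simp [c1]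
lemma Tc_c0_apply (x : Fin 2 → ℝ) : Tc c0 x = ![-(x 0), x 1] := by
  funext i; fin_cases i <;> simp [Tc, c0]
lemma Tc_c1_apply (x : Fin 2 → ℝ) : Tc c1 x = ![x 0, -(x 1)] := by
  funext i; fin_cases i <;> simp [Tc, c1]

lemma quadrant (Ω : Set (Fin 2 → ℝ)) (hΩm : MeasurableSet Ω)
    (hΩsym : ∀ p ∈ Ω, ![-(p 0), p 1] ∈ Ω ∧ ![p 0, -(p 1)] ∈ Ω)
    (G : (Fin 2 → ℝ) → ℝ) (hG : IntegrableOn G Ω)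
    (hG0 : ∀ x, G (Tc c0 x) = G x) (hG1 : ∀ x, G (Tc c1 x) = G x) :
    ∫ x in Ω, G x = 4 * ∫ x in Ω ∩ {x | 0 < x 0 ∧ 0 < x 1}, G x := by
  have hΩ0 : ∀ x ∈ Ω, Tc c0 x ∈ Ω := fun x hx => by rw [Tc_c0_apply]; exact (hΩsym x hx).1
  have hΩ1 : ∀ x ∈ Ω, Tc c1 x ∈ Ω := fun x hx => by rw [Tc_c1_apply]; exact (hΩsym x hx).2
  set SA : Set (Fin 2 → ℝ) := {x | 0 < x 0 ∧ 0 < x 1} with hSA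
  set SB : Set (Fin 2 → ℝ) := {x | x 0 < 0 ∧ 0 < x 1} with hSB
  set SC : Set (Fin 2 → ℝ) := {x | 0 < x 0 ∧ x 1 < 0} with hSC
  set SD : Set (Fin 2 → ℝ) := {x | x 0 < 0 ∧ x 1 < 0} with hSD
  have m0 : Measurable fun x : Fin 2 → ℝ => x 0 := measurable_pi_apply 0
  have m1 : Measurable fun x : Fin 2 → ℝ => x 1 := measurable_pi_apply 1
  have hSAm : MeasurableSet SA := (measurableSet_lt measurable_const m0).inter (measurableSet_lt measurable_const m1)
  have hSBm : MeasurableSet SB := (measurableSet_lt m0 measurable_const).inter (measurableSet_lt measurable_const m1)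
  have hSCm : MeasurableSet SC := (measurableSet_lt measurable_const m0).inter (measurableSet_lt m1 measurable_const)
  have hSDm : MeasurableSet SD := (measurableSet_lt m0 measurable_const).inter (measurableSet_lt m1 measurable_const)
  have memSA : ∀ x : Fin 2 → ℝ, x ∈ SA ↔ (0 < x 0 ∧ 0 < x 1) := fun x => Iff.rfl
  have memSB : ∀ x : Fin 2 → ℝ, x ∈ SB ↔ (x 0 < 0 ∧ 0 < x 1) := fun x => Iff.rfl
  have memSC : ∀ x : Fin 2 → ℝ, x ∈ SC ↔ (0 < x 0 ∧ x 1 < 0) := fun x => Iff.rfl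
  have memSD : ∀ x : Fin 2 → ℝ, x ∈ SD ↔ (x 0 < 0 ∧ x 1 < 0) := fun x => Iff.rfl
  have hTc0 : ∀ x : Fin 2 → ℝ, (Tc c0 x) 0 = -(x 0) ∧ (Tc c0 x) 1 = x 1 := by
    intro x; rw [Tc_c0_apply]; constructor <;> simp
  have hTc1 : ∀ x : Fin 2 → ℝ, (Tc c1 x) 0 = x 0 ∧ (Tc c1 x) 1 = -(x 1) := by
    intro x; rw [Tc_c1_apply]; constructor <;> simp
  -- image identities
  have himgB : Tc c0 '' (Ω ∩ SA) = Ω ∩ SB := by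
    apply Tc_image c0 c0_pm Ω hΩ0
    · intro x hx; rcases hTc0 x with ⟨h1, h2⟩; exact ⟨by rw [h1]; linarith [hx.1], by rw [h2]; exact hx.2⟩
    · intro x hx; rcases hTc0 x with ⟨h1, h2⟩; exact ⟨by rw [h1]; linarith [hx.1], by rw [h2]; exact hx.2⟩
  have himgC : Tc c1 '' (Ω ∩ SA) = Ω ∩ SC := by
    apply Tc_image c1 c1_pm Ω hΩ1
    · intro x hx; rcases hTc1 x with ⟨h1, h2⟩; exact ⟨by rw [h1]; exact hx.1, by rw [h2]; linarith [hx.2]⟩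
    · intro x hx; rcases hTc1 x with ⟨h1, h2⟩; exact ⟨by rw [h1]; exact hx.1, by rw [h2]; linarith [hx.2]⟩
  have himgD : Tc c1 '' (Ω ∩ SB) = Ω ∩ SD := by
    apply Tc_image c1 c1_pm Ω hΩ1
    · intro x hx; rcases hTc1 x with ⟨h1, h2⟩; exact ⟨by rw [h1]; exact hx.1, by rw [h2]; linarith [hx.2]⟩
    · intro x hx; rcases hTc1 x with ⟨h1, h2⟩; exact ⟨by rw [h1]; exact hx.1, by rw [h2]; linarith [hx.2]⟩
  -- equal integrals on the four quadrant pieces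
  have hIB : ∫ x in Ω ∩ SB, G x = ∫ x in Ω ∩ SA, G x := by
    rw [← himgB, integral_Tc c0 c0_pm _ (hΩm.inter hSAm)]
    exact setIntegral_congr_fun (hΩm.inter hSAm) (fun x _ => hG0 x)
  have hIC : ∫ x in Ω ∩ SC, G x = ∫ x in Ω ∩ SA, G x := by
    rw [← himgC, integral_Tc c1 c1_pm _ (hΩm.inter hSAm)]
    exact setIntegral_congr_fun (hΩm.inter hSAm) (fun x _ => hG1 x)
  have hID : ∫ x in Ω ∩ SD, G x = ∫ x in Ω ∩ SA, G x := by
    rw [← himgD, integral_Tc c1 c1_pm _ (hΩm.inter hSBm)]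
    rw [setIntegral_congr_fun (hΩm.inter hSBm) (fun x _ => hG1 x)]
    exact hIB
  -- Ω is a.e. equal to the union of the four open quadrant pieces
  have hnull : volume ({x : Fin 2 → ℝ | x 0 = 0} ∪ {x : Fin 2 → ℝ | x 1 = 0}) = 0 :=
    measure_union_null (axes_null 0) (axes_null 1)
  have hsub : Ω \ ((Ω ∩ SA) ∪ (Ω ∩ SB) ∪ (Ω ∩ SC) ∪ (Ω ∩ SD))
      ⊆ {x : Fin 2 → ℝ | x 0 = 0} ∪ {x : Fin 2 → ℝ | x 1 = 0} := by
    rintro x ⟨hx, hnx⟩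
    by_contra hne
    simp only [Set.mem_union, Set.mem_setOf_eq, not_or] at hne
    obtain ⟨h0, h1⟩ := hne
    apply hnx
    rcases Ne.lt_or_gt h0 with h0' | h0' <;> rcases Ne.lt_or_gt h1 with h1' | h1'
    · exact Or.inr ⟨hx, (memSD x).2 ⟨h0', h1'⟩⟩
    · exact Or.inl (Or.inl (Or.inr ⟨hx, (memSB x).2 ⟨h0', h1'⟩⟩))
    · exact Or.inl (Or.inr ⟨hx, (memSC x).2 ⟨h0', h1'⟩⟩)
    · exact Or.inl (Or.inl (Or.inl ⟨hx, (memSA x).2 ⟨h0', h1'⟩⟩))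
  have haeq : Ω =ᵐ[volume] (((Ω ∩ SA) ∪ (Ω ∩ SB) ∪ (Ω ∩ SC) ∪ (Ω ∩ SD) : Set (Fin 2 → ℝ))) := by
    rw [MeasureTheory.ae_eq_set]
    constructor
    · exact measure_mono_null hsub hnull
    · have : ((Ω ∩ SA) ∪ (Ω ∩ SB) ∪ (Ω ∩ SC) ∪ (Ω ∩ SD)) \ Ω = ∅ := by
        apply Set.eq_empty_of_subset_empty
        rintro x ⟨hx, hnx⟩
        rcases hx with ((⟨h,_⟩|⟨h,_⟩)|⟨h,_⟩)|⟨h,_⟩ <;> exact absurd h hnx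
      rw [this]; simp
  -- disjointness
  have hd1 : Disjoint (Ω ∩ SA) (Ω ∩ SB) := by
    apply Set.disjoint_left.2; rintro x ⟨_, h1⟩ ⟨_, h2⟩
    have a1 := ((memSA x).1 h1).1; have a2 := ((memSB x).1 h2).1; linarith
  have hd2 : Disjoint ((Ω ∩ SA) ∪ (Ω ∩ SB)) (Ω ∩ SC) := by
    apply Set.disjoint_left.2
    rintro x (⟨_, h1⟩ | ⟨_, h1⟩) ⟨_, h2⟩
    · have a1 := ((memSA x).1 h1).2; have a2 := ((memSC x).1 h2).2; linarith
    · have a1 := ((memSB x).1 h1).2; have a2 := ((memSC x).1 h2).2; linarith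
  have hd3 : Disjoint ((Ω ∩ SA) ∪ (Ω ∩ SB) ∪ (Ω ∩ SC)) (Ω ∩ SD) := by
    apply Set.disjoint_left.2
    rintro x ((⟨_, h1⟩ | ⟨_, h1⟩) | ⟨_, h1⟩) ⟨_, h2⟩
    · have a1 := ((memSA x).1 h1).1; have a2 := ((memSD x).1 h2).1; linarith
    · have a1 := ((memSB x).1 h1).2; have a2 := ((memSD x).1 h2).2; linarith
    · have a1 := ((memSC x).1 h1).1; have a2 := ((memSD x).1 h2).1; linarith
  have hiA : IntegrableOn G (Ω ∩ SA) := hG.mono_set Set.inter_subset_left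
  have hiB : IntegrableOn G (Ω ∩ SB) := hG.mono_set Set.inter_subset_left
  have hiC : IntegrableOn G (Ω ∩ SC) := hG.mono_set Set.inter_subset_left
  have hiD : IntegrableOn G (Ω ∩ SD) := hG.mono_set Set.inter_subset_left
  calc ∫ x in Ω, G x = ∫ x in ((Ω ∩ SA) ∪ (Ω ∩ SB) ∪ (Ω ∩ SC) ∪ (Ω ∩ SD)), G x :=
        setIntegral_congr_set haeq
    _ = (∫ x in ((Ω ∩ SA) ∪ (Ω ∩ SB) ∪ (Ω ∩ SC)), G x) + ∫ x in Ω ∩ SD, G x := by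
        rw [setIntegral_union hd3 (hΩm.inter hSDm) (((hiA.union hiB).union hiC)) hiD]
    _ = (∫ x in ((Ω ∩ SA) ∪ (Ω ∩ SB)), G x) + (∫ x in Ω ∩ SC, G x) + ∫ x in Ω ∩ SD, G x := by
        rw [setIntegral_union hd2 (hΩm.inter hSCm) (hiA.union hiB) hiC]
    _ = (∫ x in Ω ∩ SA, G x) + (∫ x in Ω ∩ SB, G x) + (∫ x in Ω ∩ SC, G x) + ∫ x in Ω ∩ SD, G x := by
        rw [setIntegral_union hd1 (hΩm.inter hSBm) hiA hiB]
    _ = 4 * ∫ x in Ω ∩ SA, G x := by rw [hIB, hIC, hID]; ring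



lemma eval_bind (x : Fin 2 → ℝ) (v : Fin 2 → MvPolynomial (Fin 2) ℝ) (p : MvPolynomial (Fin 2) ℝ) :
    eval x (bind₁ v p) = eval (fun i => eval x (v i)) p :=
  eval₂Hom_bind₁ (RingHom.id ℝ) x v p

lemma eval_sub2 (x : Fin 2 → ℝ) (p : MvPolynomial (Fin 2) ℝ) :
    eval x (sub2 p) = eval (fun i => x i ^ 2) p := by
  rw [sub2, eval_bind]
  have h : (fun i => eval x (X i ^ 2)) = fun i => x i ^ 2 := by funext i; simp
  rw [h]

def flipc (s : Fin 2 → ℝ) : MvPolynomial (Fin 2) ℝ →ₐ[ℝ] MvPolynomial (Fin 2) ℝ :=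
  bind₁ (fun i => C (s i) * X i)

lemma eval_flipc (s : Fin 2 → ℝ) (x : Fin 2 → ℝ) (p : MvPolynomial (Fin 2) ℝ) :
    eval x (flipc s p) = eval (Tc s x) p := by
  rw [flipc, eval_bind]
  have h : (fun i => eval x (C (s i) * X i)) = Tc s x := by funext i; simp [Tc]
  rw [h]

lemma fprodM {M : Type*} [CommMonoid M] (x : Fin 2 → M) (d : Fin 2 →₀ ℕ) :
    (d.prod fun i k => x i ^ k) = x 0 ^ d 0 * x 1 ^ d 1 := by
  rw [Finsupp.prod_fintype _ _ (fun i => pow_zero _), Fin.prod_univ_two]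

lemma dsum (d : Fin 2 →₀ ℕ) : (d.sum fun _ e => e) = d 0 + d 1 := by
  rw [Finsupp.sum_fintype _ _ (fun i => rfl), Fin.sum_univ_two]

lemma flipc_monomial (s : Fin 2 → ℝ) (d : Fin 2 →₀ ℕ) (r : ℝ) :
    flipc s (monomial d r) = monomial d ((s 0 ^ d 0 * s 1 ^ d 1) * r) := by
  rw [flipc, bind₁_monomial, monomial_eq, fprodM]
  rw [Finset.prod_subset (Finset.subset_univ d.support)
    (fun i _ hi => by simp [Finsupp.notMem_support_iff.1 hi])]
  rw [Fin.prod_univ_two, mul_pow, mul_pow, ← C_pow, ← C_pow, C_mul, C_mul]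
  ring

lemma coeff_flipc (s : Fin 2 → ℝ) (d : Fin 2 →₀ ℕ) (p : MvPolynomial (Fin 2) ℝ) :
    coeff d (flipc s p) = (s 0 ^ d 0 * s 1 ^ d 1) * coeff d p := by
  conv_lhs => rw [as_sum p]
  rw [map_sum, coeff_sum]
  simp_rw [flipc_monomial, coeff_monomial]
  rw [Finset.sum_ite_eq' p.support d (fun b => (s 0 ^ b 0 * s 1 ^ b 1) * coeff b p)]
  by_cases hd : d ∈ p.support
  · rw [if_pos hd]
  · rw [if_neg hd, MvPolynomial.notMem_support_iff.1 hd, mul_zero]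

lemma support_flipc (s : Fin 2 → ℝ) (p : MvPolynomial (Fin 2) ℝ) :
    (flipc s p).support ⊆ p.support := by
  intro d hd
  rw [mem_support_iff] at hd ⊢
  intro h; rw [coeff_flipc, h, mul_zero] at hd; exact hd rfl

lemma neg_one_pow_nat_eq {m n : ℕ} (h : ((-1 : ℝ)) ^ m = (-1) ^ n) : m % 2 = n % 2 := by
  rcases Nat.even_or_odd m with hm | hm <;> rcases Nat.even_or_odd n with hn | hn
  · rw [Nat.even_iff] at hm hn; omega
  · exfalso; rw [hm.neg_one_pow, hn.neg_one_pow] at h; norm_num at h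
  · exfalso; rw [hm.neg_one_pow, hn.neg_one_pow] at h; norm_num at h
  · rw [Nat.odd_iff] at hm hn; omega


lemma flipc_eq_smul (s : Fin 2 → ℝ) (p : MvPolynomial (Fin 2) ℝ) (a : ℕ)
    (hp : ∀ x : Fin 2 → ℝ, eval (Tc s x) p = (-1 : ℝ) ^ a * eval x p) :
    (flipc s p : MvPolynomial (Fin 2) ℝ) = C ((-1 : ℝ) ^ a) * p := by
  apply MvPolynomial.funext
  intro x
  rw [eval_flipc, eval_mul, eval_C, hp]

lemma support_parity0 (p : MvPolynomial (Fin 2) ℝ) (a : ℕ)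
    (hp : ∀ x : Fin 2 → ℝ, eval (Tc c0 x) p = (-1 : ℝ) ^ a * eval x p) :
    ∀ d ∈ p.support, d 0 % 2 = a % 2 := by
  intro d hd
  have hco := congrArg (coeff d) (flipc_eq_smul c0 p a hp)
  rw [coeff_flipc, coeff_C_mul] at hco
  have hc : coeff d p ≠ 0 := mem_support_iff.1 hd
  have h00 : c0 0 = -1 := rfl
  have h01 : c0 1 = 1 := rfl
  rw [h00, h01, one_pow, mul_one] at hco
  exact neg_one_pow_nat_eq (mul_right_cancel₀ hc hco)

lemma support_parity1 (p : MvPolynomial (Fin 2) ℝ) (b : ℕ)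
    (hp : ∀ x : Fin 2 → ℝ, eval (Tc c1 x) p = (-1 : ℝ) ^ b * eval x p) :
    ∀ d ∈ p.support, d 1 % 2 = b % 2 := by
  intro d hd
  have hco := congrArg (coeff d) (flipc_eq_smul c1 p b hp)
  rw [coeff_flipc, coeff_C_mul] at hco
  have hc : coeff d p ≠ 0 := mem_support_iff.1 hd
  have h00 : c1 0 = 1 := rfl
  have h01 : c1 1 = -1 := rfl
  rw [h00, h01, one_pow, one_mul] at hco
  exact neg_one_pow_nat_eq (mul_right_cancel₀ hc hco)

lemma rep_lemma (a b : ℕ) (ha : a ≤ 1) (hb : b ≤ 1) (p : MvPolynomial (Fin 2) ℝ)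
    (h0 : ∀ d ∈ p.support, d 0 % 2 = a % 2) (h1 : ∀ d ∈ p.support, d 1 % 2 = b % 2) :
    ∃ r : MvPolynomial (Fin 2) ℝ, p = X 0 ^ a * X 1 ^ b * sub2 r ∧
      ∀ k : ℕ, (∀ d ∈ p.support, d 0 + d 1 ≤ 2 * k + a + b) → r.totalDegree ≤ k := by
  classical
  refine ⟨∑ d ∈ p.support, monomial (Finsupp.mapRange (· / 2) (by norm_num) d) (coeff d p),
    ?_, ?_⟩
  · apply MvPolynomial.funext
    intro x
    rw [eval_mul, eval_mul, eval_pow, eval_pow, eval_X, eval_X, eval_sub2, map_sum]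
    conv_lhs => rw [eval_eq' x p]
    rw [Finset.mul_sum]
    apply Finset.sum_congr rfl
    intro d hd
    rw [eval_monomial, fprodM]
    simp only [Finsupp.mapRange_apply]
    rw [Fin.prod_univ_two, ← pow_mul, ← pow_mul]
    have e0 : d 0 = 2 * (d 0 / 2) + a := by have := h0 d hd; omega
    have e1 : d 1 = 2 * (d 1 / 2) + b := by have := h1 d hd; omega
    calc coeff d p * (x 0 ^ d 0 * x 1 ^ d 1)
        = coeff d p * (x 0 ^ (2 * (d 0 / 2) + a) * x 1 ^ (2 * (d 1 / 2) + b)) := by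
          rw [← e0, ← e1]
      _ = x 0 ^ a * x 1 ^ b * (coeff d p * (x 0 ^ (2 * (d 0 / 2)) * x 1 ^ (2 * (d 1 / 2)))) := by
          rw [pow_add, pow_add]; ring
  · intro k hk
    apply le_trans (totalDegree_finset_sum _ _)
    apply Finset.sup_le
    intro d hd
    apply le_trans (totalDegree_monomial_le _ _)
    have hsum : ((Finsupp.mapRange (· / 2) (by norm_num : (0:ℕ) / 2 = 0) d).sum fun _ => id)
        = d 0 / 2 + d 1 / 2 := by
      rw [Finsupp.sum_fintype _ _ (fun i => rfl), Fin.sum_univ_two]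
      simp [Finsupp.mapRange_apply]
    rw [hsum]
    have := hk d hd
    have := h0 d hd
    have := h1 d hd
    omega

lemma deg_sub2 (f : MvPolynomial (Fin 2) ℝ) (k : ℕ) (hf : f.totalDegree ≤ k) :
    (sub2 f).totalDegree ≤ 2 * k := by
  conv_lhs => rw [as_sum f]
  rw [sub2, map_sum]
  apply le_trans (totalDegree_finset_sum _ _)
  apply Finset.sup_le
  intro d hd
  rw [bind₁_monomial]
  apply le_trans (totalDegree_mul _ _)
  rw [totalDegree_C, zero_add]
  apply le_trans (totalDegree_finset_prod _ _)
  have : ∀ i ∈ d.support, ((X i ^ 2 : MvPolynomial (Fin 2) ℝ) ^ d i).totalDegree = 2 * d i := by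
    intro i _
    rw [← pow_mul, totalDegree_X_pow]
  rw [Finset.sum_congr rfl this, ← Finset.mul_sum]
  have hds : ∑ i ∈ d.support, d i ≤ k := by
    have h2 := MvPolynomial.le_totalDegree hd
    have : (d.sum fun _ e => e) = ∑ i ∈ d.support, d i := rfl
    omega
  omega

lemma deg_pattern (a b : ℕ) (f : MvPolynomial (Fin 2) ℝ) (k : ℕ) (hf : f.totalDegree ≤ k) :
    (X 0 ^ a * X 1 ^ b * sub2 f : MvPolynomial (Fin 2) ℝ).totalDegree ≤ a + b + 2 * k := by
  apply le_trans (totalDegree_mul _ _)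
  have h2 := deg_sub2 f k hf
  have h3 : (X 0 ^ a * X 1 ^ b : MvPolynomial (Fin 2) ℝ).totalDegree ≤ a + b := by
    apply le_trans (totalDegree_mul _ _)
    rw [totalDegree_X_pow, totalDegree_X_pow]
  omega



def sqmap : (Fin 2 → ℝ) → (Fin 2 → ℝ) := fun x i => x i ^ 2

lemma sq_change (Ω : Set (Fin 2 → ℝ)) (hΩm : MeasurableSet Ω)
    (sqrtΩ : Set (Fin 2 → ℝ))
    (hsq : sqrtΩ = {p | ∃ s t : ℝ, 0 ≤ s ∧ 0 ≤ t ∧ ![s, t] ∈ Ω ∧ p = ![s ^ 2, t ^ 2]})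
    (F : (Fin 2 → ℝ) → ℝ) :
    ∫ u in sqrtΩ, F u
      = ∫ x in Ω ∩ {x : Fin 2 → ℝ | 0 < x 0 ∧ 0 < x 1}, (4 * x 0 * x 1) * F (sqmap x) := by
  set A := Ω ∩ {x : Fin 2 → ℝ | 0 < x 0 ∧ 0 < x 1} with hA
  have hAm : MeasurableSet A := hΩm.inter
    ((measurableSet_lt measurable_const (measurable_pi_apply 0)).inter
      (measurableSet_lt measurable_const (measurable_pi_apply 1)))
  have hmemA : ∀ x : Fin 2 → ℝ, x ∈ A ↔ (x ∈ Ω ∧ 0 < x 0 ∧ 0 < x 1) := fun x => Iff.rfl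
  -- a.e. equality of sqrtΩ and sqmap '' A
  have h1 : sqmap '' A ⊆ sqrtΩ := by
    rintro u ⟨x, hx, rfl⟩
    rw [hsq]
    obtain ⟨hxΩ, h0, h1⟩ := (hmemA x).1 hx
    refine ⟨x 0, x 1, h0.le, h1.le, by rwa [vec2], ?_⟩
    funext i; fin_cases i <;> rfl
  have h2 : sqrtΩ \ sqmap '' A ⊆ {x : Fin 2 → ℝ | x 0 = 0} ∪ {x : Fin 2 → ℝ | x 1 = 0} := by
    rintro u ⟨hu, hnu⟩
    rw [hsq] at hu
    obtain ⟨s, t, hs, ht, hst, rfl⟩ := hu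
    rcases eq_or_lt_of_le hs with hs0 | hs0
    · left; show (![s ^ 2, t ^ 2] : Fin 2 → ℝ) 0 = 0; simp [← hs0]
    rcases eq_or_lt_of_le ht with ht0 | ht0
    · right; show (![s ^ 2, t ^ 2] : Fin 2 → ℝ) 1 = 0; simp [← ht0]
    exfalso; apply hnu
    refine ⟨![s, t], ?_, ?_⟩
    · rw [hmemA]
      refine ⟨hst, by simp [hs0], by simp [ht0]⟩
    · funext i; fin_cases i <;> simp [sqmap]
  have haeq : sqrtΩ =ᵐ[volume] (sqmap '' A) := by
    rw [MeasureTheory.ae_eq_set]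
    constructor
    · exact measure_mono_null h2 (measure_union_null (axes_null 0) (axes_null 1))
    · have : sqmap '' A \ sqrtΩ = ∅ := by
        apply Set.eq_empty_of_subset_empty
        rintro u ⟨hu, hnu⟩
        exact absurd (h1 hu) hnu
      rw [this]; simp
  rw [setIntegral_congr_set haeq]
  have hd : ∀ x ∈ A, HasFDerivWithinAt sqmap (diagCLM (fun i => 2 * x i)) A x := by
    intro x _
    exact (hasFDerivAt_diag (fun i t => t ^ 2) (fun i => 2 * x i) x
      (fun i => by simpa using hasDerivAt_pow 2 (x i))).hasFDerivWithinAt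
  have hinj : Set.InjOn sqmap A := by
    intro x hx y hy hxy
    obtain ⟨-, hx0, hx1⟩ := (hmemA x).1 hx
    obtain ⟨-, hy0, hy1⟩ := (hmemA y).1 hy
    funext i
    have h := congrFun hxy i
    simp only [sqmap] at h
    have hxi : 0 < x i := by fin_cases i <;> assumption
    have hyi : 0 < y i := by fin_cases i <;> assumption
    have hfac : (x i - y i) * (x i + y i) = 0 := by ring_nf; linarith [h]
    rcases mul_eq_zero.1 hfac with h' | h'
    · linarith
    · linarith
  rw [integral_image_eq_integral_abs_det_fderiv_smul volume hAm hd hinj F]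
  apply setIntegral_congr_fun hAm
  intro x hx
  obtain ⟨-, hx0, hx1⟩ := (hmemA x).1 hx
  simp only [diagCLM_det, smul_eq_mul]
  have habs : |2 * x 0 * (2 * x 1)| = 4 * x 0 * x 1 := by
    rw [abs_of_pos (by positivity)]; ring
  rw [habs]

lemma rpow_helper (y : ℝ) (hy : 0 < y) (a : ℕ) :
    ((y ^ 2 : ℝ)) ^ ((a : ℝ) - 1 / 2) = y ^ (2 * a) / y := by
  have h : (((2:ℕ)):ℝ) * ((a:ℝ) - 1/2) = ((2*a : ℕ) : ℝ) - 1 := by push_cast; ring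
  rw [← Real.rpow_natCast y 2, ← Real.rpow_mul hy.le, h, Real.rpow_sub hy, Real.rpow_one,
    Real.rpow_natCast]

def wpoly (w : ℝ → ℝ → ℝ) (Ω : Set (Fin 2 → ℝ)) (p q : MvPolynomial (Fin 2) ℝ) : ℝ :=
  ∫ x in Ω, eval x p * eval x q * w (x 0) (x 1)

lemma wip_eq_wpoly (w : ℝ → ℝ → ℝ) (Ω : Set (Fin 2 → ℝ)) (WΩ : (Fin 2 → ℝ) → ℝ)
    (hWΩ : WΩ = fun p => w (p 0) (p 1)) (p q : MvPolynomial (Fin 2) ℝ) :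
    wip WΩ Ω (fun x => eval x p) (fun x => eval x q) = wpoly w Ω p q := by
  rw [hWΩ]; rfl

lemma eval_pattern (a b : ℕ) (f : MvPolynomial (Fin 2) ℝ) (x : Fin 2 → ℝ) :
    eval x (X 0 ^ a * X 1 ^ b * sub2 f) = x 0 ^ a * x 1 ^ b * eval (fun i => x i ^ 2) f := by
  rw [eval_mul, eval_mul, eval_pow, eval_pow, eval_X, eval_X, eval_sub2]

lemma Tc_c0_0 (x : Fin 2 → ℝ) : Tc c0 x 0 = -(x 0) := by
  show c0 0 * x 0 = -(x 0); show (-1 : ℝ) * x 0 = -(x 0); ring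
lemma Tc_c0_1 (x : Fin 2 → ℝ) : Tc c0 x 1 = x 1 := by
  show c0 1 * x 1 = x 1; show (1 : ℝ) * x 1 = x 1; ring
lemma Tc_c1_0 (x : Fin 2 → ℝ) : Tc c1 x 0 = x 0 := by
  show c1 0 * x 0 = x 0; show (1 : ℝ) * x 0 = x 0; ring
lemma Tc_c1_1 (x : Fin 2 → ℝ) : Tc c1 x 1 = -(x 1) := by
  show c1 1 * x 1 = -(x 1); show (-1 : ℝ) * x 1 = -(x 1); ring

lemma Tc_sq0 (x : Fin 2 → ℝ) : (fun i => Tc c0 x i ^ 2) = fun i => x i ^ 2 := by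
  funext i
  fin_cases i
  · show Tc c0 x 0 ^ 2 = x 0 ^ 2; rw [Tc_c0_0]; ring
  · show Tc c0 x 1 ^ 2 = x 1 ^ 2; rw [Tc_c0_1]
lemma Tc_sq1 (x : Fin 2 → ℝ) : (fun i => Tc c1 x i ^ 2) = fun i => x i ^ 2 := by
  funext i
  fin_cases i
  · show Tc c1 x 0 ^ 2 = x 0 ^ 2; rw [Tc_c1_0]
  · show Tc c1 x 1 ^ 2 = x 1 ^ 2; rw [Tc_c1_1]; ring

lemma pat_flip0 (a b : ℕ) (f : MvPolynomial (Fin 2) ℝ) (x : Fin 2 → ℝ) :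
    eval (Tc c0 x) (X 0 ^ a * X 1 ^ b * sub2 f)
      = (-1 : ℝ) ^ a * eval x (X 0 ^ a * X 1 ^ b * sub2 f) := by
  rw [eval_pattern, eval_pattern, Tc_c0_0, Tc_c0_1, Tc_sq0, neg_pow]
  ring

lemma pat_flip1 (a b : ℕ) (f : MvPolynomial (Fin 2) ℝ) (x : Fin 2 → ℝ) :
    eval (Tc c1 x) (X 0 ^ a * X 1 ^ b * sub2 f)
      = (-1 : ℝ) ^ b * eval x (X 0 ^ a * X 1 ^ b * sub2 f) := by
  rw [eval_pattern, eval_pattern, Tc_c1_0, Tc_c1_1, Tc_sq1, neg_pow]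
  ring

lemma neg_one_sq_pow (a : ℕ) : ((-1 : ℝ) ^ a) * ((-1 : ℝ) ^ a) = 1 := by
  rw [← pow_add]
  exact Even.neg_one_pow ⟨a, rfl⟩

lemma keyChange (Ω : Set (Fin 2 → ℝ)) (hΩm : MeasurableSet Ω)
    (hΩsym : ∀ p ∈ Ω, ![-(p 0), p 1] ∈ Ω ∧ ![p 0, -(p 1)] ∈ Ω)
    (w : ℝ → ℝ → ℝ)
    (hwsym : ∀ s t : ℝ, w (-s) t = w s t ∧ w s (-t) = w s t)
    (hmom : ∀ q : MvPolynomial (Fin 2) ℝ,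
      IntegrableOn (fun p => eval p q * w (p 0) (p 1)) Ω volume)
    (sqrtΩ : Set (Fin 2 → ℝ))
    (hsq : sqrtΩ = {p | ∃ s t : ℝ, 0 ≤ s ∧ 0 ≤ t ∧ ![s, t] ∈ Ω ∧ p = ![s ^ 2, t ^ 2]})
    (wE : ℝ → ℝ → (Fin 2 → ℝ) → ℝ)
    (hwE : ∀ e f : ℝ, wE e f =
      fun p => p 0 ^ e * p 1 ^ f * w (Real.sqrt (p 0)) (Real.sqrt (p 1)))
    (a b : ℕ) (e f' : ℝ) (hea : e = (a : ℝ) - 1 / 2) (heb : f' = (b : ℝ) - 1 / 2)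
    (F G : MvPolynomial (Fin 2) ℝ) :
    wip (wE e f') sqrtΩ (fun x => eval x F) (fun x => eval x G)
      = wpoly w Ω (X 0 ^ a * X 1 ^ b * sub2 F) (X 0 ^ a * X 1 ^ b * sub2 G) := by
  set pF := (X 0 ^ a * X 1 ^ b * sub2 F : MvPolynomial (Fin 2) ℝ) with hpF
  set pG := (X 0 ^ a * X 1 ^ b * sub2 G : MvPolynomial (Fin 2) ℝ) with hpG
  set G2 : (Fin 2 → ℝ) → ℝ := fun x => eval x pF * eval x pG * w (x 0) (x 1) with hG2
  have hint : IntegrableOn G2 Ω volume := by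
    have h := hmom (pF * pG)
    have heq : (fun x : Fin 2 → ℝ => eval x (pF * pG) * w (x 0) (x 1)) = G2 := by
      funext x; rw [eval_mul]
    rwa [heq] at h
  have hG20 : ∀ x, G2 (Tc c0 x) = G2 x := by
    intro x
    show eval (Tc c0 x) pF * eval (Tc c0 x) pG * w (Tc c0 x 0) (Tc c0 x 1)
      = eval x pF * eval x pG * w (x 0) (x 1)
    rw [hpF, hpG, pat_flip0, pat_flip0, Tc_c0_0, Tc_c0_1, (hwsym (x 0) (x 1)).1]
    have hs := neg_one_sq_pow a
    calc ((-1:ℝ)^a * eval x (X 0 ^ a * X 1 ^ b * sub2 F))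
          * ((-1:ℝ)^a * eval x (X 0 ^ a * X 1 ^ b * sub2 G)) * w (x 0) (x 1)
        = ((-1:ℝ)^a * (-1:ℝ)^a) * (eval x (X 0 ^ a * X 1 ^ b * sub2 F)
          * eval x (X 0 ^ a * X 1 ^ b * sub2 G) * w (x 0) (x 1)) := by ring
      _ = _ := by rw [hs, one_mul]
  have hG21 : ∀ x, G2 (Tc c1 x) = G2 x := by
    intro x
    show eval (Tc c1 x) pF * eval (Tc c1 x) pG * w (Tc c1 x 0) (Tc c1 x 1)
      = eval x pF * eval x pG * w (x 0) (x 1)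
    rw [hpF, hpG, pat_flip1, pat_flip1, Tc_c1_0, Tc_c1_1, (hwsym (x 0) (x 1)).2]
    have hs := neg_one_sq_pow b
    calc ((-1:ℝ)^b * eval x (X 0 ^ a * X 1 ^ b * sub2 F))
          * ((-1:ℝ)^b * eval x (X 0 ^ a * X 1 ^ b * sub2 G)) * w (x 0) (x 1)
        = ((-1:ℝ)^b * (-1:ℝ)^b) * (eval x (X 0 ^ a * X 1 ^ b * sub2 F)
          * eval x (X 0 ^ a * X 1 ^ b * sub2 G) * w (x 0) (x 1)) := by ring
      _ = _ := by rw [hs, one_mul]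
  have hquad := quadrant Ω hΩm hΩsym G2 hint hG20 hG21
  have hRHS : wpoly w Ω pF pG = ∫ x in Ω, G2 x := rfl
  rw [hRHS, hquad, hwE]
  have hLHS : wip (fun p : Fin 2 → ℝ => p 0 ^ e * p 1 ^ f' * w (Real.sqrt (p 0)) (Real.sqrt (p 1)))
      sqrtΩ (fun x => eval x F) (fun x => eval x G)
      = ∫ u in sqrtΩ, (fun u : Fin 2 → ℝ => eval u F * eval u G
          * (u 0 ^ e * u 1 ^ f' * w (Real.sqrt (u 0)) (Real.sqrt (u 1)))) u := rfl
  rw [hLHS, sq_change Ω hΩm sqrtΩ hsq]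
  rw [← MeasureTheory.integral_const_mul]
  have hAm : MeasurableSet (Ω ∩ {x : Fin 2 → ℝ | 0 < x 0 ∧ 0 < x 1}) := hΩm.inter
    ((measurableSet_lt measurable_const (measurable_pi_apply 0)).inter
      (measurableSet_lt measurable_const (measurable_pi_apply 1)))
  apply setIntegral_congr_fun hAm
  intro x hx
  have hx0 : 0 < x 0 := hx.2.1
  have hx1 : 0 < x 1 := hx.2.2
  show 4 * x 0 * x 1 * (eval (sqmap x) F * eval (sqmap x) G
      * (sqmap x 0 ^ e * sqmap x 1 ^ f' * w (Real.sqrt (sqmap x 0)) (Real.sqrt (sqmap x 1))))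
    = 4 * G2 x
  have hs0 : sqmap x 0 = x 0 ^ 2 := rfl
  have hs1 : sqmap x 1 = x 1 ^ 2 := rfl
  have hsqm : sqmap x = fun i => x i ^ 2 := rfl
  rw [hs0, hs1, hsqm, Real.sqrt_sq hx0.le, Real.sqrt_sq hx1.le, hea, heb,
    rpow_helper (x 0) hx0 a, rpow_helper (x 1) hx1 b]
  show _ = 4 * (eval x pF * eval x pG * w (x 0) (x 1))
  rw [hpF, hpG, eval_pattern, eval_pattern]
  have h2a : x 0 ^ (2 * a) = x 0 ^ a * x 0 ^ a := by rw [two_mul, pow_add]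
  have h2b : x 1 ^ (2 * b) = x 1 ^ b * x 1 ^ b := by rw [two_mul, pow_add]
  rw [h2a, h2b]
  field_simp

lemma wpoly_integrable (w : ℝ → ℝ → ℝ) (Ω : Set (Fin 2 → ℝ))
    (hmom : ∀ q : MvPolynomial (Fin 2) ℝ,
      IntegrableOn (fun p => eval p q * w (p 0) (p 1)) Ω volume)
    (p q : MvPolynomial (Fin 2) ℝ) :
    IntegrableOn (fun x => eval x p * eval x q * w (x 0) (x 1)) Ω volume := by
  have h := hmom (p * q)
  have heq : (fun x : Fin 2 → ℝ => eval x (p * q) * w (x 0) (x 1))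
      = fun x => eval x p * eval x q * w (x 0) (x 1) := by
    funext x; rw [eval_mul]
  rwa [heq] at h

lemma wpoly_add_left (w : ℝ → ℝ → ℝ) (Ω : Set (Fin 2 → ℝ))
    (hmom : ∀ q : MvPolynomial (Fin 2) ℝ,
      IntegrableOn (fun p => eval p q * w (p 0) (p 1)) Ω volume)
    (p q r : MvPolynomial (Fin 2) ℝ) :
    wpoly w Ω (p + q) r = wpoly w Ω p r + wpoly w Ω q r := by
  have h1 := wpoly_integrable w Ω hmom p r
  have h2 := wpoly_integrable w Ω hmom q r
  have heq : (fun x : Fin 2 → ℝ => eval x (p + q) * eval x r * w (x 0) (x 1))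
      = fun x => (eval x p * eval x r * w (x 0) (x 1))
        + (eval x q * eval x r * w (x 0) (x 1)) := by
    funext x; rw [eval_add]; ring
  rw [wpoly, heq, integral_add h1 h2]
  rfl

lemma wpoly_smul_left (w : ℝ → ℝ → ℝ) (Ω : Set (Fin 2 → ℝ)) (c : ℝ)
    (p q : MvPolynomial (Fin 2) ℝ) :
    wpoly w Ω (C c * p) q = c * wpoly w Ω p q := by
  rw [wpoly, wpoly, ← MeasureTheory.integral_const_mul]
  congr 1
  funext x
  rw [eval_mul, eval_C]
  ring

lemma wpoly_zero_left (w : ℝ → ℝ → ℝ) (Ω : Set (Fin 2 → ℝ)) (q : MvPolynomial (Fin 2) ℝ) :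
    wpoly w Ω 0 q = 0 := by
  simp [wpoly]

lemma wpoly_sum_left (w : ℝ → ℝ → ℝ) (Ω : Set (Fin 2 → ℝ))
    (hmom : ∀ q : MvPolynomial (Fin 2) ℝ,
      IntegrableOn (fun p => eval p q * w (p 0) (p 1)) Ω volume)
    {ι : Type*} (s : Finset ι) (f : ι → MvPolynomial (Fin 2) ℝ) (q : MvPolynomial (Fin 2) ℝ) :
    wpoly w Ω (∑ i ∈ s, f i) q = ∑ i ∈ s, wpoly w Ω (f i) q := by
  classical
  induction s using Finset.induction_on with
  | empty => simp [wpoly_zero_left]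
  | insert _ _ hnot ih =>
    rw [Finset.sum_insert hnot, Finset.sum_insert hnot, wpoly_add_left w Ω hmom, ih]

lemma wpoly_flip (cc : Fin 2 → ℝ) (hc : ∀ i, cc i = 1 ∨ cc i = -1)
    (Ω : Set (Fin 2 → ℝ)) (hΩm : MeasurableSet Ω)
    (hcl : ∀ x ∈ Ω, Tc cc x ∈ Ω) (w : ℝ → ℝ → ℝ)
    (hwinv : ∀ x : Fin 2 → ℝ, w (Tc cc x 0) (Tc cc x 1) = w (x 0) (x 1))
    (p y : MvPolynomial (Fin 2) ℝ) :
    wpoly w Ω (flipc cc p) y = wpoly w Ω p (flipc cc y) := by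
  have him : Tc cc '' Ω = Ω := by
    ext z
    constructor
    · rintro ⟨x, hx, rfl⟩; exact hcl x hx
    · intro hz; exact ⟨Tc cc z, hcl z hz, Tc_invol cc hc z⟩
  have key := integral_Tc cc hc Ω hΩm
    (fun x => eval x p * eval x (flipc cc y) * w (x 0) (x 1))
  rw [him] at key
  have hfun : (fun x : Fin 2 → ℝ => eval x (flipc cc p) * eval x y * w (x 0) (x 1))
      = fun x => eval (Tc cc x) p * eval (Tc cc x) (flipc cc y)
        * w (Tc cc x 0) (Tc cc x 1) := by
    funext x
    rw [eval_flipc, eval_flipc, Tc_invol cc hc, hwinv]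
  rw [wpoly, hfun, wpoly, ← key]

lemma wpoly_vanish (cc : Fin 2 → ℝ) (hc : ∀ i, cc i = 1 ∨ cc i = -1)
    (Ω : Set (Fin 2 → ℝ)) (hΩm : MeasurableSet Ω)
    (hcl : ∀ x ∈ Ω, Tc cc x ∈ Ω) (G : (Fin 2 → ℝ) → ℝ)
    (hodd : ∀ x, G (Tc cc x) = -G x) :
    ∫ x in Ω, G x = 0 := by
  have him : Tc cc '' Ω = Ω := by
    ext z
    constructor
    · rintro ⟨x, hx, rfl⟩; exact hcl x hx
    · intro hz; exact ⟨Tc cc z, hcl z hz, Tc_invol cc hc z⟩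
  have key := integral_Tc cc hc Ω hΩm G
  rw [him] at key
  have : (fun x : Fin 2 → ℝ => G (Tc cc x)) = fun x => -G x := funext hodd
  rw [this, integral_neg] at key
  linarith



lemma Tc_comm (x : Fin 2 → ℝ) : Tc c0 (Tc c1 x) = Tc c1 (Tc c0 x) := by
  funext i
  show c0 i * (c1 i * x i) = c1 i * (c0 i * x i)
  ring

lemma support_Cmul (c : ℝ) (p : MvPolynomial (Fin 2) ℝ) :
    (C c * p).support ⊆ p.support := by
  intro d hd
  rw [mem_support_iff] at hd ⊢
  intro h
  rw [coeff_C_mul, h, mul_zero] at hd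
  exact hd rfl

lemma wpoly_comm (w : ℝ → ℝ → ℝ) (Ω : Set (Fin 2 → ℝ)) (p q : MvPolynomial (Fin 2) ℝ) :
    wpoly w Ω p q = wpoly w Ω q p := by
  rw [wpoly, wpoly]
  congr 1
  funext x
  ring

def patL (a b : ℕ) : MvPolynomial (Fin 2) ℝ →ₗ[ℝ] MvPolynomial (Fin 2) ℝ :=
  (LinearMap.mulLeft ℝ ((X 0 : MvPolynomial (Fin 2) ℝ) ^ a * X 1 ^ b)).comp
    (bind₁ (fun i : Fin 2 => ((X i : MvPolynomial (Fin 2) ℝ)) ^ 2)).toLinearMap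

lemma patL_apply (a b : ℕ) (f : MvPolynomial (Fin 2) ℝ) :
    patL a b f = X 0 ^ a * X 1 ^ b * sub2 f := rfl

lemma span_pat (a b : ℕ) (P : ℕ → MvPolynomial (Fin 2) ℝ) (k : ℕ)
    (r : MvPolynomial (Fin 2) ℝ) (hr : r ∈ Submodule.span ℝ (P '' Set.Iic k)) :
    (X 0 ^ a * X 1 ^ b * sub2 r : MvPolynomial (Fin 2) ℝ)
      ∈ Submodule.span ℝ ((fun j => X 0 ^ a * X 1 ^ b * sub2 (P j)) '' Set.Iic k) := by
  have h := Submodule.mem_map_of_mem (f := patL a b) hr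
  rw [Submodule.map_span, Set.image_image] at h
  simpa [patL_apply] using h

lemma par0_of (p : MvPolynomial (Fin 2) ℝ) (r : ℝ)
    (h : ∀ s t : ℝ, eval ![-s, t] p = r * eval ![s, t] p) :
    ∀ x : Fin 2 → ℝ, eval (Tc c0 x) p = r * eval x p := by
  intro x
  have := h (x 0) (x 1)
  rwa [vec2, ← Tc_c0_apply] at this

lemma par0_to (p : MvPolynomial (Fin 2) ℝ) (r : ℝ)
    (h : ∀ x : Fin 2 → ℝ, eval (Tc c0 x) p = r * eval x p) :
    ∀ s t : ℝ, eval ![-s, t] p = r * eval ![s, t] p := by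
  intro s t
  have := h ![s, t]
  rw [Tc_c0_apply] at this
  simpa using this

-- evaluation parity of 4-term combos
lemma combo4_eval0 (q : MvPolynomial (Fin 2) ℝ) (s t : ℝ) (hs : s * s = 1) (x : Fin 2 → ℝ) :
    eval (Tc c0 x) (C (4⁻¹ : ℝ) * (q + C s * flipc c0 q + C t * flipc c1 q
        + C (s * t) * flipc c0 (flipc c1 q)))
      = s * eval x (C (4⁻¹ : ℝ) * (q + C s * flipc c0 q + C t * flipc c1 q
        + C (s * t) * flipc c0 (flipc c1 q))) := by
  simp only [eval_mul, eval_add, eval_C, eval_flipc]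
  simp only [Tc_invol c0 c0_pm, Tc_invol c1 c1_pm, ← Tc_comm]
  linear_combination (-(4⁻¹ : ℝ) * (eval (Tc c0 x) q + t * eval (Tc c0 (Tc c1 x)) q)) * hs

lemma combo4_eval1 (q : MvPolynomial (Fin 2) ℝ) (s t : ℝ) (ht : t * t = 1) (x : Fin 2 → ℝ) :
    eval (Tc c1 x) (C (4⁻¹ : ℝ) * (q + C s * flipc c0 q + C t * flipc c1 q
        + C (s * t) * flipc c0 (flipc c1 q)))
      = t * eval x (C (4⁻¹ : ℝ) * (q + C s * flipc c0 q + C t * flipc c1 q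
        + C (s * t) * flipc c0 (flipc c1 q))) := by
  simp only [eval_mul, eval_add, eval_C, eval_flipc]
  simp only [Tc_invol c0 c0_pm, Tc_invol c1 c1_pm, ← Tc_comm]
  linear_combination (-(4⁻¹ : ℝ) * (eval (Tc c1 x) q + s * eval (Tc c0 (Tc c1 x)) q)) * ht

lemma combo2_eval1 (p : MvPolynomial (Fin 2) ℝ) (t : ℝ) (ht : t * t = 1) (x : Fin 2 → ℝ) :
    eval (Tc c1 x) (C (2⁻¹ : ℝ) * (p + C t * flipc c1 p))
      = t * eval x (C (2⁻¹ : ℝ) * (p + C t * flipc c1 p)) := by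
  simp only [eval_mul, eval_add, eval_C, eval_flipc]
  rw [Tc_invol c1 c1_pm]
  linear_combination (-(2⁻¹ : ℝ) * eval (Tc c1 x) p) * ht

lemma combo2_eval0 (p : MvPolynomial (Fin 2) ℝ) (t r : ℝ) (x : Fin 2 → ℝ)
    (hp : ∀ y : Fin 2 → ℝ, eval (Tc c0 y) p = r * eval y p) :
    eval (Tc c0 x) (C (2⁻¹ : ℝ) * (p + C t * flipc c1 p))
      = r * eval x (C (2⁻¹ : ℝ) * (p + C t * flipc c1 p)) := by
  simp only [eval_mul, eval_add, eval_C, eval_flipc]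
  rw [← Tc_comm, hp x, hp (Tc c1 x)]
  ring

lemma wpoly_add_right (w : ℝ → ℝ → ℝ) (Ω : Set (Fin 2 → ℝ))
    (hmom : ∀ q : MvPolynomial (Fin 2) ℝ,
      IntegrableOn (fun p => eval p q * w (p 0) (p 1)) Ω volume)
    (r p q : MvPolynomial (Fin 2) ℝ) :
    wpoly w Ω r (p + q) = wpoly w Ω r p + wpoly w Ω r q := by
  rw [wpoly_comm w Ω r (p + q), wpoly_add_left w Ω hmom p q r,
    wpoly_comm w Ω p r, wpoly_comm w Ω q r]

lemma wpoly_smul_right (w : ℝ → ℝ → ℝ) (Ω : Set (Fin 2 → ℝ)) (c : ℝ)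
    (p q : MvPolynomial (Fin 2) ℝ) :
    wpoly w Ω p (C c * q) = c * wpoly w Ω p q := by
  rw [wpoly_comm w Ω p (C c * q), wpoly_smul_left, wpoly_comm]

lemma support_combo4 (q : MvPolynomial (Fin 2) ℝ) (s t : ℝ) :
    (C (4⁻¹ : ℝ) * (q + C s * flipc c0 q + C t * flipc c1 q
      + C (s * t) * flipc c0 (flipc c1 q))).support ⊆ q.support := by
  refine (support_Cmul _ _).trans ?_
  refine support_add.trans (Finset.union_subset (support_add.trans (Finset.union_subset
    (support_add.trans (Finset.union_subset (Finset.Subset.refl _) ?_)) ?_)) ?_)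
  · exact (support_Cmul _ _).trans (support_flipc _ _)
  · exact (support_Cmul _ _).trans (support_flipc _ _)
  · exact (support_Cmul _ _).trans ((support_flipc _ _).trans (support_flipc _ _))

lemma support_combo2 (p : MvPolynomial (Fin 2) ℝ) (t : ℝ) :
    (C (2⁻¹ : ℝ) * (p + C t * flipc c1 p)).support ⊆ p.support := by
  refine (support_Cmul _ _).trans ?_
  refine support_add.trans (Finset.union_subset (Finset.Subset.refl _) ?_)
  exact (support_Cmul _ _).trans (support_flipc _ _)

lemma deg_flipc (s : Fin 2 → ℝ) (p : MvPolynomial (Fin 2) ℝ) :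
    (flipc s p).totalDegree ≤ p.totalDegree :=
  totalDegree_le_of_support_subset (support_flipc s p)

lemma C4_id : (C (4⁻¹ : ℝ) : MvPolynomial (Fin 2) ℝ) * 4 = 1 := by
  have h4 : ((4 : MvPolynomial (Fin 2) ℝ)) = C (4 : ℝ) := by
    rw [map_ofNat]
  rw [h4, ← C_mul]
  norm_num

lemma C2_id : (C (2⁻¹ : ℝ) : MvPolynomial (Fin 2) ℝ) * 2 = 1 := by
  have h2 : ((2 : MvPolynomial (Fin 2) ℝ)) = C (2 : ℝ) := by
    rw [map_ofNat]
  rw [h2, ← C_mul]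
  norm_num




lemma master (Ω : Set (Fin 2 → ℝ)) (hΩm : MeasurableSet Ω)
    (hΩsym : ∀ p ∈ Ω, ![-(p 0), p 1] ∈ Ω ∧ ![p 0, -(p 1)] ∈ Ω)
    (w : ℝ → ℝ → ℝ)
    (hwsym : ∀ s t : ℝ, w (-s) t = w s t ∧ w s (-t) = w s t)
    (hmom : ∀ q : MvPolynomial (Fin 2) ℝ,
      IntegrableOn (fun p => eval p q * w (p 0) (p 1)) Ω volume)
    (sqrtΩ : Set (Fin 2 → ℝ))
    (hsq : sqrtΩ = {p | ∃ s t : ℝ, 0 ≤ s ∧ 0 ≤ t ∧ ![s, t] ∈ Ω ∧ p = ![s ^ 2, t ^ 2]})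
    (wE : ℝ → ℝ → (Fin 2 → ℝ) → ℝ)
    (hwE : ∀ e f : ℝ, wE e f =
      fun p => p 0 ^ e * p 1 ^ f * w (Real.sqrt (p 0)) (Real.sqrt (p 1)))
    (WΩ : (Fin 2 → ℝ) → ℝ) (hWΩ : WΩ = fun p => w (p 0) (p 1))
    (a b k : ℕ) (ha : a ≤ 1) (hb : b ≤ 1)
    (e eb eb' : ℝ) (hea : e = (a : ℝ) - 1 / 2) (heb : eb = (b : ℝ) - 1 / 2)
    (heb' : eb' = ((1 - b : ℕ) : ℝ) - 1 / 2)
    (P : ℕ → MvPolynomial (Fin 2) ℝ)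
    (hP : IsONBasisFor (Set.Iic k) P (Vsp k (wE e eb) sqrtΩ) (wE e eb) sqrtΩ)
    (P' : ℕ → MvPolynomial (Fin 2) ℝ)
    (hP' : IsONBasisFor (Set.Iic (k + b - 1)) P'
      (Vsp (k + b - 1) (wE e eb') sqrtΩ) (wE e eb') sqrtΩ) :
    IsONBasisFor (Set.Iic k) (fun j => X 0 ^ a * X 1 ^ b * sub2 (P j))
      {p | p ∈ Vsp (2 * k + a + b) WΩ Ω ∧
        ∀ s t : ℝ, eval ![-s, t] p = (-1 : ℝ) ^ a * eval ![s, t] p} WΩ Ω := by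
  classical
  obtain ⟨hPmem, hPort, hPspan⟩ := hP
  obtain ⟨hP'mem, hP'ort, hP'span⟩ := hP'
  set n := 2 * k + a + b with hn
  set b' := 1 - b with hb'def
  set K := k + b - 1 with hKdef
  have hcl0 : ∀ x ∈ Ω, Tc c0 x ∈ Ω := fun x hx => by rw [Tc_c0_apply]; exact (hΩsym x hx).1
  have hcl1 : ∀ x ∈ Ω, Tc c1 x ∈ Ω := fun x hx => by rw [Tc_c1_apply]; exact (hΩsym x hx).2
  have hw0 : ∀ x : Fin 2 → ℝ, w (Tc c0 x 0) (Tc c0 x 1) = w (x 0) (x 1) := fun x => by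
    rw [Tc_c0_0, Tc_c0_1, (hwsym (x 0) (x 1)).1]
  have hw1 : ∀ x : Fin 2 → ℝ, w (Tc c1 x 0) (Tc c1 x 1) = w (x 0) (x 1) := fun x => by
    rw [Tc_c1_0, Tc_c1_1, (hwsym (x 0) (x 1)).2]
  have hkey : ∀ F G : MvPolynomial (Fin 2) ℝ,
      wip (wE e eb) sqrtΩ (fun x => eval x F) (fun x => eval x G)
        = wpoly w Ω (X 0 ^ a * X 1 ^ b * sub2 F) (X 0 ^ a * X 1 ^ b * sub2 G) :=
    fun F G => keyChange Ω hΩm hΩsym w hwsym hmom sqrtΩ hsq wE hwE a b e eb hea heb F G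
  have hkey' : ∀ F G : MvPolynomial (Fin 2) ℝ,
      wip (wE e eb') sqrtΩ (fun x => eval x F) (fun x => eval x G)
        = wpoly w Ω (X 0 ^ a * X 1 ^ b' * sub2 F) (X 0 ^ a * X 1 ^ b' * sub2 G) :=
    fun F G => keyChange Ω hΩm hΩsym w hwsym hmom sqrtΩ hsq wE hwE a b' e eb' hea heb' F G
  have hwipq : ∀ p q : MvPolynomial (Fin 2) ℝ,
      wip WΩ Ω (fun x => eval x p) (fun x => eval x q) = wpoly w Ω p q :=
    wip_eq_wpoly w Ω WΩ hWΩ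
  have hsa := neg_one_sq_pow a
  have hsb := neg_one_sq_pow b
  -- the central orthogonality fact:
  have hmain : ∀ j, (P j).totalDegree ≤ k →
      (∀ y : MvPolynomial (Fin 2) ℝ, y.totalDegree < k →
        wip (wE e eb) sqrtΩ (fun x => eval x (P j)) (fun x => eval x y) = 0) →
      ∀ q : MvPolynomial (Fin 2) ℝ, q.totalDegree < n →
        wpoly w Ω (X 0 ^ a * X 1 ^ b * sub2 (P j)) q = 0 := by
    intro j hdegPj horthPj q hq
    set Vj := (X 0 ^ a * X 1 ^ b * sub2 (P j) : MvPolynomial (Fin 2) ℝ) with hVj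
    set qc : ℝ → ℝ → MvPolynomial (Fin 2) ℝ := fun s t =>
      C (4⁻¹ : ℝ) * (q + C s * flipc c0 q + C t * flipc c1 q
        + C (s * t) * flipc c0 (flipc c1 q)) with hqc
    -- any mismatch component integrates to zero against Vj
    have hmismatch : ∀ s t : ℝ, s * s = 1 → t * t = 1 →
        ((-1 : ℝ) ^ a * s = -1 ∨ (-1 : ℝ) ^ b * t = -1) →
        wpoly w Ω Vj (qc s t) = 0 := by
      intro s t hs ht hcase
      have hGdef : wpoly w Ω Vj (qc s t)
          = ∫ x in Ω, (fun x => eval x Vj * eval x (qc s t) * w (x 0) (x 1)) x := rfl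
      rcases hcase with hcs | hct
      · rw [hGdef]
        apply wpoly_vanish c0 c0_pm Ω hΩm hcl0
        intro x
        show eval (Tc c0 x) Vj * eval (Tc c0 x) (qc s t) * w (Tc c0 x 0) (Tc c0 x 1)
          = -(eval x Vj * eval x (qc s t) * w (x 0) (x 1))
        rw [hw0, hVj, pat_flip0, hqc]
        rw [combo4_eval0 q s t hs x]
        have : ((-1 : ℝ) ^ a) * s = -1 := hcs
        linear_combination (eval x (X 0 ^ a * X 1 ^ b * sub2 (P j))
          * eval x (qc s t) * w (x 0) (x 1)) * this
      · rw [hGdef]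
        apply wpoly_vanish c1 c1_pm Ω hΩm hcl1
        intro x
        show eval (Tc c1 x) Vj * eval (Tc c1 x) (qc s t) * w (Tc c1 x 0) (Tc c1 x 1)
          = -(eval x Vj * eval x (qc s t) * w (x 0) (x 1))
        rw [hw1, hVj, pat_flip1, hqc]
        rw [combo4_eval1 q s t ht x]
        linear_combination (eval x (X 0 ^ a * X 1 ^ b * sub2 (P j))
          * eval x (qc s t) * w (x 0) (x 1)) * hct
    -- the matching component also gives zero
    have hmatch : wpoly w Ω Vj (qc ((-1 : ℝ) ^ a) ((-1 : ℝ) ^ b)) = 0 := by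
      set qm := qc ((-1 : ℝ) ^ a) ((-1 : ℝ) ^ b) with hqm
      have hpar0 : ∀ x : Fin 2 → ℝ, eval (Tc c0 x) qm = (-1 : ℝ) ^ a * eval x qm := by
        intro x; rw [hqm, hqc]; exact combo4_eval0 q _ _ hsa x
      have hpar1 : ∀ x : Fin 2 → ℝ, eval (Tc c1 x) qm = (-1 : ℝ) ^ b * eval x qm := by
        intro x; rw [hqm, hqc]; exact combo4_eval1 q _ _ hsb x
      have hsupp : qm.support ⊆ q.support := by rw [hqm, hqc]; exact support_combo4 q _ _
      have hd0 := support_parity0 qm a hpar0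
      have hd1 := support_parity1 qm b hpar1
      have hbound : ∀ d ∈ qm.support, d 0 + d 1 ≤ n - 1 := by
        intro d hd
        have h1 := MvPolynomial.le_totalDegree (hsupp hd)
        rw [dsum] at h1
        omega
      by_cases hk : k = 0
      · have hempty : qm.support = ∅ := by
          apply Finset.eq_empty_of_forall_notMem
          intro d hd
          have h1 := hbound d hd
          have h2 := hd0 d hd
          have h3 := hd1 d hd
          omega
        rw [support_eq_empty.1 hempty, wpoly_comm, wpoly_zero_left]
      · obtain ⟨g, hgeq, hgdeg⟩ := rep_lemma a b ha hb qm hd0 hd1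
        have hgk : g.totalDegree ≤ k - 1 := by
          apply hgdeg
          intro d hd
          have h1 := hbound d hd
          have h2 := hd0 d hd
          have h3 := hd1 d hd
          omega
        rw [hgeq, hVj, ← hkey (P j) g]
        exact horthPj g (by omega)
    -- decomposition of q and conclusion
    have hdecomp : q = qc 1 1 + qc 1 (-1) + qc (-1) 1 + qc (-1) (-1) := by
      simp only [hqc]
      have hC := C4_id
      simp only [one_mul, mul_one, neg_mul, mul_neg, neg_neg, map_one, map_neg]
      linear_combination (-q) * hC
    have hsplit : wpoly w Ω Vj q
        = wpoly w Ω Vj (qc 1 1) + wpoly w Ω Vj (qc 1 (-1))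
          + wpoly w Ω Vj (qc (-1) 1) + wpoly w Ω Vj (qc (-1) (-1)) := by
      conv_lhs => rw [hdecomp]
      rw [wpoly_add_right w Ω hmom, wpoly_add_right w Ω hmom, wpoly_add_right w Ω hmom]
    have hae : (-1 : ℝ) ^ a = 1 ∨ (-1 : ℝ) ^ a = -1 := by
      interval_cases a <;> norm_num
    have hbe : (-1 : ℝ) ^ b = 1 ∨ (-1 : ℝ) ^ b = -1 := by
      interval_cases b <;> norm_num
    rw [hsplit]
    rcases hae with hae | hae <;> rcases hbe with hbe | hbe
    · have h1 : wpoly w Ω Vj (qc 1 1) = 0 := by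
        have h := hmatch; rw [hae, hbe] at h; exact h
      have h2 := hmismatch 1 (-1) (by norm_num) (by norm_num) (by right; rw [hbe]; norm_num)
      have h3 := hmismatch (-1) 1 (by norm_num) (by norm_num) (by left; rw [hae]; norm_num)
      have h4 := hmismatch (-1) (-1) (by norm_num) (by norm_num) (by left; rw [hae]; norm_num)
      rw [h1, h2, h3, h4]; ring
    · have h1 : wpoly w Ω Vj (qc 1 (-1)) = 0 := by
        have h := hmatch; rw [hae, hbe] at h; exact h
      have h2 := hmismatch 1 1 (by norm_num) (by norm_num) (by right; rw [hbe]; norm_num)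
      have h3 := hmismatch (-1) 1 (by norm_num) (by norm_num) (by left; rw [hae]; norm_num)
      have h4 := hmismatch (-1) (-1) (by norm_num) (by norm_num) (by left; rw [hae]; norm_num)
      rw [h1, h2, h3, h4]; ring
    · have h1 : wpoly w Ω Vj (qc (-1) 1) = 0 := by
        have h := hmatch; rw [hae, hbe] at h; exact h
      have h2 := hmismatch 1 1 (by norm_num) (by norm_num) (by left; rw [hae]; norm_num)
      have h3 := hmismatch 1 (-1) (by norm_num) (by norm_num) (by left; rw [hae]; norm_num)
      have h4 := hmismatch (-1) (-1) (by norm_num) (by norm_num) (by right; rw [hbe]; norm_num)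
      rw [h1, h2, h3, h4]; ring
    · have h1 : wpoly w Ω Vj (qc (-1) (-1)) = 0 := by
        have h := hmatch; rw [hae, hbe] at h; exact h
      have h2 := hmismatch 1 1 (by norm_num) (by norm_num) (by left; rw [hae]; norm_num)
      have h3 := hmismatch 1 (-1) (by norm_num) (by norm_num) (by left; rw [hae]; norm_num)
      have h4 := hmismatch (-1) 1 (by norm_num) (by norm_num) (by right; rw [hbe]; norm_num)
      rw [h1, h2, h3, h4]; ring
  refine ⟨?_, ?_, ?_⟩
  · -- membership
    intro j hj
    have hPj := hPmem j hj
    have hdegPj : (P j).totalDegree ≤ k := hPj.1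
    refine ⟨⟨?_, ?_⟩, ?_⟩
    · show (X 0 ^ a * X 1 ^ b * sub2 (P j)).totalDegree ≤ n
      have := deg_pattern a b (P j) k hdegPj
      omega
    · intro q hq
      rw [hwipq]
      exact hmain j hdegPj hPj.2 q hq
    · exact par0_to _ _ (fun x => pat_flip0 a b (P j) x)
  · -- orthonormality
    intro i hi j hj
    rw [hwipq, ← hkey (P i) (P j)]
    exact hPort i hi j hj
  · -- spanning
    intro p hp
    obtain ⟨hpV, hparp⟩ := hp
    obtain ⟨hdegp, horthp⟩ := hpV
    have horthp' : ∀ y : MvPolynomial (Fin 2) ℝ, y.totalDegree < n → wpoly w Ω p y = 0 :=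
      fun y hy => by rw [← hwipq]; exact horthp y hy
    have hpar0x : ∀ x : Fin 2 → ℝ, eval (Tc c0 x) p = (-1 : ℝ) ^ a * eval x p :=
      par0_of p _ hparp
    set pg := C (2⁻¹ : ℝ) * (p + C ((-1 : ℝ) ^ b) * flipc c1 p) with hpgdef
    set pb := C (2⁻¹ : ℝ) * (p + C (-(-1 : ℝ) ^ b) * flipc c1 p) with hpbdef
    have hsign : (-(-1 : ℝ) ^ b) = (-1 : ℝ) ^ b' := by
      rw [hb'def]; interval_cases b <;> norm_num
    have hpdecomp : p = pg + pb := by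
      rw [hpgdef, hpbdef]
      have hC := C2_id
      simp only [map_neg]
      linear_combination (-p) * hC
    have hcombo_orth : ∀ (s : ℝ) (y : MvPolynomial (Fin 2) ℝ), y.totalDegree < n →
        wpoly w Ω (C (2⁻¹ : ℝ) * (p + C s * flipc c1 p)) y = 0 := by
      intro s y hy
      rw [wpoly_smul_left, wpoly_add_left w Ω hmom, wpoly_smul_left,
        wpoly_flip c1 c1_pm Ω hΩm hcl1 w hw1 p y,
        horthp' y hy, horthp' (flipc c1 y) (lt_of_le_of_lt (deg_flipc c1 y) hy)]
      ring
    have hpg1 : ∀ x, eval (Tc c1 x) pg = (-1 : ℝ) ^ b * eval x pg := by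
      intro x; rw [hpgdef]; exact combo2_eval1 p _ hsb x
    have hpg0 : ∀ x, eval (Tc c0 x) pg = (-1 : ℝ) ^ a * eval x pg := by
      intro x; rw [hpgdef]; exact combo2_eval0 p _ _ x hpar0x
    have hpb1 : ∀ x, eval (Tc c1 x) pb = (-1 : ℝ) ^ b' * eval x pb := by
      intro x; rw [hpbdef, ← hsign]
      exact combo2_eval1 p _ (by nlinarith [hsb]) x
    have hpb0 : ∀ x, eval (Tc c0 x) pb = (-1 : ℝ) ^ a * eval x pb := by
      intro x; rw [hpbdef]; exact combo2_eval0 p _ _ x hpar0x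
    have hsuppg : pg.support ⊆ p.support := by rw [hpgdef]; exact support_combo2 p _
    have hsuppb : pb.support ⊆ p.support := by rw [hpbdef]; exact support_combo2 p _
    obtain ⟨r, hreq, hrdeg⟩ := rep_lemma a b ha hb pg
      (support_parity0 pg a hpg0) (support_parity1 pg b hpg1)
    have hrk : r.totalDegree ≤ k := by
      apply hrdeg
      intro d hd
      have h1 := MvPolynomial.le_totalDegree (hsuppg hd)
      rw [dsum] at h1
      omega
    obtain ⟨g, hgeq, hgdeg⟩ := rep_lemma a b' ha (by omega) pb
      (support_parity0 pb a hpb0) (support_parity1 pb b' hpb1)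
    have hpb0eq : pb = 0 := by
      by_cases hkb : k + b = 0
      · have hempty : pb.support = ∅ := by
          apply Finset.eq_empty_of_forall_notMem
          intro d hd
          have h1 := MvPolynomial.le_totalDegree (hsuppb hd)
          rw [dsum] at h1
          have h2 := support_parity0 pb a hpb0 d hd
          have h3 := support_parity1 pb b' hpb1 d hd
          omega
        exact support_eq_empty.1 hempty
      · have hq_orth : ∀ y : MvPolynomial (Fin 2) ℝ, y.totalDegree ≤ K →
            wpoly w Ω pb (X 0 ^ a * X 1 ^ b' * sub2 y) = 0 := by
          intro y hy
          have hdy := deg_pattern a b' y K hy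
          rw [hpbdef]
          exact hcombo_orth _ _ (by omega)
        have hgV : g ∈ Vsp K (wE e eb') sqrtΩ := by
          constructor
          · apply hgdeg
            intro d hd
            have h1 := MvPolynomial.le_totalDegree (hsuppb hd)
            rw [dsum] at h1
            have h2 := support_parity0 pb a hpb0 d hd
            have h3 := support_parity1 pb b' hpb1 d hd
            omega
          · intro y hy
            rw [hkey' g y, ← hgeq]
            exact hq_orth y (by omega)
        have hspan' := hP'span g hgV
        have himg : P' '' Set.Iic K = ↑((Finset.Iic K).image P') := by
          rw [Finset.coe_image, Finset.coe_Iic]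
        rw [himg] at hspan'
        obtain ⟨cf, -, hcf⟩ := Submodule.mem_span_finset.1 hspan'
        have hinj : ∀ x ∈ Finset.Iic K, ∀ y ∈ Finset.Iic K, P' x = P' y → x = y := by
          intro x hx y hy hxy
          by_contra hne
          have h1 := hP'ort x (Set.mem_Iic.2 (Finset.mem_Iic.1 hx)) y (Set.mem_Iic.2 (Finset.mem_Iic.1 hy))
          rw [if_neg hne] at h1
          have h2 := hP'ort y (Set.mem_Iic.2 (Finset.mem_Iic.1 hy)) y (Set.mem_Iic.2 (Finset.mem_Iic.1 hy))
          rw [if_pos rfl] at h2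
          rw [hxy] at h1
          rw [h1] at h2
          exact absurd h2 (by norm_num)
        rw [Finset.sum_image hinj] at hcf
        have hpb_sum : pb = ∑ j2 ∈ Finset.Iic K,
            C (cf (P' j2)) * (X 0 ^ a * X 1 ^ b' * sub2 (P' j2)) := by
          calc pb = patL a b' g := by rw [hgeq, patL_apply]
            _ = patL a b' (∑ j2 ∈ Finset.Iic K, cf (P' j2) • P' j2) := by rw [hcf]
            _ = ∑ j2 ∈ Finset.Iic K, cf (P' j2) • patL a b' (P' j2) := by
                rw [map_sum]
                refine Finset.sum_congr rfl fun j2 _ => ?_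
                rw [_root_.map_smul]
            _ = ∑ j2 ∈ Finset.Iic K,
                C (cf (P' j2)) * (X 0 ^ a * X 1 ^ b' * sub2 (P' j2)) := by
                refine Finset.sum_congr rfl fun j2 _ => ?_
                rw [smul_eq_C_mul, patL_apply]
        have hcoef : ∀ i ∈ Finset.Iic K, cf (P' i) = 0 := by
          intro i hi
          have hdi : (P' i).totalDegree ≤ K :=
            (hP'mem i (Set.mem_Iic.2 (Finset.mem_Iic.1 hi))).1
          have h0 := hq_orth (P' i) hdi
          rw [hpb_sum, wpoly_sum_left w Ω hmom] at h0
          have hterm : ∀ j2 ∈ Finset.Iic K,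
              wpoly w Ω (C (cf (P' j2)) * (X 0 ^ a * X 1 ^ b' * sub2 (P' j2)))
                (X 0 ^ a * X 1 ^ b' * sub2 (P' i))
              = cf (P' j2) * (if j2 = i then 1 else 0) := by
            intro j2 hj2
            rw [wpoly_smul_left, ← hkey' (P' j2) (P' i),
              hP'ort j2 (Set.mem_Iic.2 (Finset.mem_Iic.1 hj2)) i
                (Set.mem_Iic.2 (Finset.mem_Iic.1 hi))]
          rw [Finset.sum_congr rfl hterm] at h0
          simp only [mul_ite, mul_one, mul_zero] at h0
          rw [Finset.sum_ite_eq' (Finset.Iic K) i (fun j2 => cf (P' j2)), if_pos hi] at h0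
          exact h0
        have hg0 : g = 0 := by
          rw [← hcf]
          apply Finset.sum_eq_zero
          intro j2 hj2
          rw [hcoef j2 hj2, zero_smul]
        rw [hgeq, hg0]
        rw [sub2, map_zero, mul_zero]
    have hrV : r ∈ Vsp k (wE e eb) sqrtΩ := by
      constructor
      · exact hrk
      · intro y hy
        have hdy := deg_pattern a b y (k - 1) (by omega)
        rw [hkey r y, ← hreq, hpgdef]
        exact hcombo_orth _ _ (by omega)
    have hrspan := hPspan r hrV
    rw [hpdecomp, hpb0eq, add_zero, hreq]
    exact span_pat a b P k r hrspan


end Stmt8Aux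

/-- on a fully symmetric domain, orthonormal bases of the spaces of
orthogonal polynomials even/odd in the first variable are obtained from orthonormal
bases on `√Ω` for the four weights `w_{±1/2,±1/2}`. -/
theorem stmt8 (Ω : Set (Fin 2 → ℝ)) (hΩm : MeasurableSet Ω)
    (hΩsym : ∀ p ∈ Ω, ![-(p 0), p 1] ∈ Ω ∧ ![p 0, -(p 1)] ∈ Ω)
    (w : ℝ → ℝ → ℝ)
    (hwsym : ∀ s t : ℝ, w (-s) t = w s t ∧ w s (-t) = w s t)
    (hmom : ∀ q : MvPolynomial (Fin 2) ℝ,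
      IntegrableOn (fun p => eval p q * w (p 0) (p 1)) Ω volume)
    -- `√Ω`
    (sqrtΩ : Set (Fin 2 → ℝ))
    (hsq : sqrtΩ = {p | ∃ s t : ℝ, 0 ≤ s ∧ 0 ≤ t ∧ ![s, t] ∈ Ω ∧ p = ![s ^ 2, t ^ 2]})
    -- the weights `w_{ε,δ}(u,v) = u^ε v^δ w(√u, √v)` on `√Ω`
    (wE : ℝ → ℝ → (Fin 2 → ℝ) → ℝ)
    (hwE : ∀ e f : ℝ, wE e f =
      fun p => p 0 ^ e * p 1 ^ f * w (Real.sqrt (p 0)) (Real.sqrt (p 1)))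
    -- orthonormal bases on `√Ω` for the four sign choices
    (Pmm Pmp Ppm Ppp : ℕ → ℕ → MvPolynomial (Fin 2) ℝ)
    (hPmm : ∀ m : ℕ, IsONBasisFor (Set.Iic m) (Pmm m)
      (Vsp m (wE (-(1 / 2)) (-(1 / 2))) sqrtΩ) (wE (-(1 / 2)) (-(1 / 2))) sqrtΩ)
    (hPmp : ∀ m : ℕ, IsONBasisFor (Set.Iic m) (Pmp m)
      (Vsp m (wE (-(1 / 2)) (1 / 2)) sqrtΩ) (wE (-(1 / 2)) (1 / 2)) sqrtΩ)
    (hPpm : ∀ m : ℕ, IsONBasisFor (Set.Iic m) (Ppm m)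
      (Vsp m (wE (1 / 2) (-(1 / 2))) sqrtΩ) (wE (1 / 2) (-(1 / 2))) sqrtΩ)
    (hPpp : ∀ m : ℕ, IsONBasisFor (Set.Iic m) (Ppp m)
      (Vsp m (wE (1 / 2) (1 / 2)) sqrtΩ) (wE (1 / 2) (1 / 2)) sqrtΩ)
    (WΩ : (Fin 2 → ℝ) → ℝ) (hWΩ : WΩ = fun p => w (p 0) (p 1)) :
    -- `P_j^{2m}(w; u, v) = P_{j,m}(w_{-1/2,-1/2}; u², v²)`
    (∀ m : ℕ, IsONBasisFor (Set.Iic m) (fun j => sub2 (Pmm m j))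
      (VspE2 (2 * m) WΩ Ω) WΩ Ω) ∧
    -- `P_j^{2m+1}(w; u, v) = v · P_{j,m}(w_{-1/2,1/2}; u², v²)`
    (∀ m : ℕ, IsONBasisFor (Set.Iic m) (fun j => X 1 * sub2 (Pmp m j))
      (VspE2 (2 * m + 1) WΩ Ω) WΩ Ω) ∧
    -- `Q_j^{2m}(w; u, v) = u v · P_{j,m-1}(w_{1/2,1/2}; u², v²)`, `0 ≤ j ≤ m-1`
    (∀ m : ℕ, IsONBasisFor (Set.Iio m) (fun j => X 0 * X 1 * sub2 (Ppp (m - 1) j))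
      (VspO2 (2 * m) WΩ Ω) WΩ Ω) ∧
    -- `Q_j^{2m+1}(w; u, v) = u · P_{j,m}(w_{1/2,-1/2}; u², v²)`
    (∀ m : ℕ, IsONBasisFor (Set.Iic m) (fun j => X 0 * sub2 (Ppm m j))
      (VspO2 (2 * m + 1) WΩ Ω) WΩ Ω) := by
  
  have hsetE : ∀ n : ℕ, {p : MvPolynomial (Fin 2) ℝ | p ∈ Vsp n WΩ Ω ∧
      ∀ s t : ℝ, eval ![-s, t] p = (-1 : ℝ) ^ 0 * eval ![s, t] p} = VspE2 n WΩ Ω := by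
    intro n
    ext p
    simp only [VspE2, Set.mem_setOf_eq, pow_zero, one_mul]
  have hsetO : ∀ n : ℕ, {p : MvPolynomial (Fin 2) ℝ | p ∈ Vsp n WΩ Ω ∧
      ∀ s t : ℝ, eval ![-s, t] p = (-1 : ℝ) ^ 1 * eval ![s, t] p} = VspO2 n WΩ Ω := by
    intro n
    ext p
    simp only [VspO2, Set.mem_setOf_eq, pow_one, neg_one_mul]
  refine ⟨?_, ?_, ?_, ?_⟩
  · intro m
    have h := Stmt8Aux.master Ω hΩm hΩsym w hwsym hmom sqrtΩ hsq wE hwE WΩ hWΩ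
      0 0 m (by norm_num) (by norm_num) (-(1/2)) (-(1/2)) (1/2)
      (by norm_num) (by norm_num) (by norm_num)
      (Pmm m) (hPmm m) (Pmp (m - 1)) (hPmp (m - 1))
    rw [hsetE] at h
    have hfun : (fun j => (X 0 : MvPolynomial (Fin 2) ℝ) ^ 0 * X 1 ^ 0 * sub2 (Pmm m j))
        = fun j => sub2 (Pmm m j) := by
      funext j; rw [pow_zero, pow_zero, one_mul, one_mul]
    rw [hfun] at h
    exact h
  · intro m
    have h := Stmt8Aux.master Ω hΩm hΩsym w hwsym hmom sqrtΩ hsq wE hwE WΩ hWΩ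
      0 1 m (by norm_num) (by norm_num) (-(1/2)) (1/2) (-(1/2))
      (by norm_num) (by norm_num) (by norm_num)
      (Pmp m) (hPmp m) (Pmm m) (hPmm m)
    rw [hsetE] at h
    have hfun : (fun j => (X 0 : MvPolynomial (Fin 2) ℝ) ^ 0 * X 1 ^ 1 * sub2 (Pmp m j))
        = fun j => X 1 * sub2 (Pmp m j) := by
      funext j; rw [pow_zero, pow_one, one_mul]
    rw [hfun] at h
    exact h
  · intro m
    rcases Nat.eq_zero_or_pos m with hm | hm
    · subst hm
      refine ⟨?_, ?_, ?_⟩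
      · intro i hi; exact absurd hi (by simp)
      · intro i hi; exact absurd hi (by simp)
      · intro p hp
        obtain ⟨⟨hdeg, -⟩, hodd⟩ := hp
        have hpar : ∀ x : Fin 2 → ℝ,
            eval (Stmt8Aux.Tc Stmt8Aux.c0 x) p = (-1 : ℝ) ^ 1 * eval x p := by
          apply Stmt8Aux.par0_of
          intro s t
          rw [pow_one, neg_one_mul]
          exact hodd s t
        have h0 := Stmt8Aux.support_parity0 p 1 hpar
        have hempty : p.support = ∅ := by
          apply Finset.eq_empty_of_forall_notMem
          intro d hd
          have h1 := MvPolynomial.le_totalDegree hd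
          rw [Stmt8Aux.dsum] at h1
          have h2 := h0 d hd
          omega
        rw [MvPolynomial.support_eq_empty.1 hempty]
        exact Submodule.zero_mem _
    · have h := Stmt8Aux.master Ω hΩm hΩsym w hwsym hmom sqrtΩ hsq wE hwE WΩ hWΩ
        1 1 (m - 1) (by norm_num) (by norm_num) (1/2) (1/2) (-(1/2))
        (by norm_num) (by norm_num) (by norm_num)
        (Ppp (m - 1)) (hPpp (m - 1)) (Ppm (m - 1)) (hPpm (m - 1))
      rw [hsetO] at h
      have hfun : (fun j => (X 0 : MvPolynomial (Fin 2) ℝ) ^ 1 * X 1 ^ 1 * sub2 (Ppp (m - 1) j))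
          = fun j => X 0 * X 1 * sub2 (Ppp (m - 1) j) := by
        funext j; rw [pow_one, pow_one]
      rw [hfun] at h
      have hidx : Set.Iic (m - 1) = Set.Iio m := by
        ext x; simp only [Set.mem_Iic, Set.mem_Iio]; omega
      have hnn : 2 * (m - 1) + 1 + 1 = 2 * m := by omega
      rw [hidx, hnn] at h
      exact h
  · intro m
    have h := Stmt8Aux.master Ω hΩm hΩsym w hwsym hmom sqrtΩ hsq wE hwE WΩ hWΩ
      1 0 m (by norm_num) (by norm_num) (1/2) (-(1/2)) (1/2)
      (by norm_num) (by norm_num) (by norm_num)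
      (Ppm m) (hPpm m) (Ppp (m - 1)) (hPpp (m - 1))
    rw [hsetO] at h
    have hfun : (fun j => (X 0 : MvPolynomial (Fin 2) ℝ) ^ 1 * X 1 ^ 0 * sub2 (Ppm m j))
        = fun j => X 0 * sub2 (Ppm m j) := by
      funext j; rw [pow_one, pow_zero, mul_one]
    rw [hfun] at h
    exact h
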